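/- arXiv:2604.03680 — 3 statements merged into one kernel-verified Lean document; each statement's English description precedes it below -/
import Mathlib

section
/- For every integer n ≥ 2, the polynomial identity n·𝒩_n(x) = 𝒫_n(x) + (n−1)(1+x)·𝒩_{n−1}(x) holds, where 𝒫_n(x) = Σ_{j=0}^{n−1} d_{n,j} x^j with d_{n,j} = C(n−1,j)^2 + C(n−1,j+1)·C(n−1,j−1) (binomial coefficients with out-of-range entries equal to 0). -/
open Polynomial

/-- The Narayana numbers `c_{n,k} = (1/n) C(n,k) C(n,k−1)` (for `1 ≤ k ≤ n`). -/
noncomputable def narayanaNum (n k : ℕ) : ℝ :=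
  (n.choose k : ℝ) * (n.choose (k - 1) : ℝ) / (n : ℝ)

/-- The reduced Narayana polynomial `𝒩_n(x) = N_n(x)/x = Σ_{j=0}^{n−1} c_{n,j+1} x^j`. -/
noncomputable def redNarayana (n : ℕ) : Polynomial ℝ :=
  ∑ j ∈ Finset.range n, Polynomial.C (narayanaNum n (j + 1)) * Polynomial.X ^ j

/-- The coefficients `d_{n,j} = C(n−1,j)² + C(n−1,j+1)·C(n−1,j−1)`, with out-of-range
binomial entries equal to `0` (in particular the `j−1` entry vanishes for `j = 0`). -/
noncomputable def narayanaD (n j : ℕ) : ℝ :=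
  ((n - 1).choose j : ℝ) ^ 2 +
    ((n - 1).choose (j + 1) : ℝ) * (if j = 0 then 0 else ((n - 1).choose (j - 1) : ℝ))

/-- The polynomial `𝒫_n(x) = Σ_{j=0}^{n−1} d_{n,j} x^j`. -/
noncomputable def narayanaP (n : ℕ) : Polynomial ℝ :=
  ∑ j ∈ Finset.range n, Polynomial.C (narayanaD n j) * Polynomial.X ^ j

lemma coeff_red (m k : ℕ) :
    (redNarayana m).coeff k = if k < m then narayanaNum m (k + 1) else 0 := by
  simp [redNarayana, Polynomial.finset_sum_coeff, Polynomial.coeff_C_mul,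
    Polynomial.coeff_X_pow, Finset.sum_ite_eq]

lemma coeff_P (m k : ℕ) :
    (narayanaP m).coeff k = if k < m then narayanaD m k else 0 := by
  simp [narayanaP, Polynomial.finset_sum_coeff, Polynomial.coeff_C_mul,
    Polynomial.coeff_X_pow, Finset.sum_ite_eq]

lemma keyR (m k : ℕ) (hm : 1 ≤ m) :
    ((m:ℝ)+1) * narayanaNum (m+1) (k+1)
      = narayanaD (m+1) k
        + (m:ℝ) * (narayanaNum m (k+1) + (if k = 0 then 0 else narayanaNum m k)) := by
  have hm0 : (m:ℝ) ≠ 0 := by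
    exact Nat.cast_ne_zero.mpr (by omega)
  have hn0 : (m:ℝ)+1 ≠ 0 := by positivity
  unfold narayanaNum narayanaD
  simp only [Nat.add_sub_cancel]
  cases k with
  | zero =>
    simp only [if_pos rfl, Nat.choose_zero_right, Nat.choose_one_right, Nat.cast_one,
      Nat.cast_add, zero_add, Nat.sub_self, ite_true, if_true]
    field_simp
    ring
  | succ i =>
    simp only [if_neg (Nat.succ_ne_zero i), Nat.add_sub_cancel,
      Nat.choose_succ_succ (m) (i+1), Nat.choose_succ_succ (m) i, Nat.succ_eq_add_one]
    field_simp
    push_cast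
    ring


/-- the identity `n·𝒩_n(x) = 𝒫_n(x) + (n−1)(1+x)·𝒩_{n−1}(x)` for `n ≥ 2`. -/
theorem stmt_14 (n : ℕ) (hn : 2 ≤ n) :
    Polynomial.C (n : ℝ) * redNarayana n
      = narayanaP n +
        Polynomial.C ((n : ℝ) - 1) * (1 + Polynomial.X) * redNarayana (n - 1) := by
  obtain ⟨m, rfl⟩ : ∃ m, n = m + 1 := ⟨n - 1, by omega⟩
  have hm : 1 ≤ m := by omega
  ext k
  have hX : (Polynomial.C ((m:ℝ)) * (1 + Polynomial.X) * redNarayana m).coeff k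
      = ((m:ℝ)) * ((redNarayana m).coeff k
          + (if k = 0 then 0 else (redNarayana m).coeff (k-1))) := by
    have h : Polynomial.C ((m:ℝ)) * (1 + Polynomial.X) * redNarayana m
        = Polynomial.C ((m:ℝ)) * redNarayana m
          + Polynomial.C ((m:ℝ)) * (Polynomial.X * redNarayana m) := by ring
    rw [h]
    cases k with
    | zero => simp [Polynomial.coeff_add, Polynomial.coeff_C_mul, Polynomial.mul_coeff_zero]
    | succ i => simp [Polynomial.coeff_add, Polynomial.coeff_C_mul, Polynomial.coeff_X_mul,
        mul_add]
  have hc : ((m:ℝ) + 1 - 1) = (m:ℝ) := by ring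
  push_cast [Nat.add_sub_cancel]
  rw [hc, Polynomial.coeff_add, hX, Polynomial.coeff_C_mul]
  simp only [coeff_red, coeff_P]
  split_ifs <;> try (exfalso; omega)
  · have h3 : k = 0 := by omega
    subst h3; simpa using keyR m 0 hm
  · rw [Nat.sub_add_cancel (by omega)]
    have h := keyR m k hm
    rw [if_neg (show ¬ k = 0 by omega)] at h
    exact h
  · rw [Nat.sub_add_cancel (by omega)]
    have h := keyR m k hm
    rw [if_neg (show ¬ k = 0 by omega)] at h
    have hz : narayanaNum m (k+1) = 0 := by
      simp [narayanaNum, Nat.choose_eq_zero_of_lt (show m < k+1 by omega)]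
    rw [hz] at h
    exact h
  · ring
end

section
/- Let n ≥ 3 be an odd integer and let 𝒫_n(x) = Σ_{j=0}^{n−1} d_{n,j} x^j with d_{n,j} = C(n−1,j)^2 + C(n−1,j+1)·C(n−1,j−1). Then 𝒫_n has n−1 real simple zeros, 𝒫_n(−1) ≠ 0, and, writing w_1 < ⋯ < w_n for the ascending arrangement of −1 together with the zeros of 𝒫_n and u_1 < ⋯ < u_{n−1} for the zeros of 𝒩_n, one has w_1 < u_1 < w_2 < u_2 < ⋯ < u_{n−1} < w_n, i.e. (x+1)𝒫_n(x) ≺ 𝒩_n(x). -/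
open Polynomial

/-! ### Auxiliary definitions and lemmas -/

noncomputable def Afun (n j : ℕ) : ℝ := (n.choose (j+1) : ℝ) * (n.choose j : ℝ)
noncomputable def Mpoly (n : ℕ) : Polynomial ℝ :=
  ∑ j ∈ Finset.range n, Polynomial.C (Afun n j) * Polynomial.X ^ j

lemma coeff_sum_range (f : ℕ → ℝ) (n k : ℕ) :
    (∑ j ∈ Finset.range n, C (f j) * X ^ j).coeff k = if k < n then f k else 0 := by
  rw [Polynomial.finset_sum_coeff]
  simp only [Polynomial.coeff_C_mul, Polynomial.coeff_X_pow, mul_ite, mul_one, mul_zero]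
  rw [Finset.sum_ite_eq (Finset.range n) k f]
  simp [Finset.mem_range]

lemma Afun_eq_zero {n j : ℕ} (h : n ≤ j) : Afun n j = 0 := by
  simp [Afun, Nat.choose_eq_zero_of_lt (lt_of_le_of_lt h (Nat.lt_succ_self j))]

lemma coeff_Mpoly (n k : ℕ) : (Mpoly n).coeff k = Afun n k := by
  rw [Mpoly, coeff_sum_range]
  split_ifs with h
  · rfl
  · exact (Afun_eq_zero (le_of_not_gt h)).symm

lemma narayanaD_eq_zero {n k : ℕ} (hn : 1 ≤ n) (h : n ≤ k) : narayanaD n k = 0 := by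
  have h1 : (n-1).choose k = 0 := Nat.choose_eq_zero_of_lt (by omega)
  have h2 : (n-1).choose (k+1) = 0 := Nat.choose_eq_zero_of_lt (by omega)
  simp [narayanaD, h1, h2]

lemma coeff_P_s15 {n : ℕ} (hn : 1 ≤ n) (k : ℕ) : (narayanaP n).coeff k = narayanaD n k := by
  rw [narayanaP, coeff_sum_range]
  split_ifs with h
  · rfl
  · exact (narayanaD_eq_zero hn (le_of_not_gt h)).symm

lemma Rabs (N k : ℕ) : (N.choose (k+1) : ℝ) * (k+1) = (N.choose k : ℝ) * ((N:ℝ) - k) := by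
  rcases le_or_gt k N with h | h
  · have := Nat.choose_succ_right_eq N k
    have hc : ((N.choose (k+1) * (k+1) : ℕ) : ℝ) = ((N.choose k * (N - k) : ℕ) : ℝ) := by
      exact_mod_cast congrArg (Nat.cast (R := ℝ)) this
    push_cast [Nat.cast_sub h] at hc
    linarith
  · have h1 : N.choose (k+1) = 0 := Nat.choose_eq_zero_of_lt (by omega)
    have h2 : N.choose k = 0 := Nat.choose_eq_zero_of_lt h
    simp [h1, h2]

lemma E2 (N t : ℕ) :
    ((N:ℝ)+1) * ((N.choose (t+1) : ℝ) * (N.choose t : ℝ)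
        - (N.choose (t+2) : ℝ) * (N.choose (t+1) : ℝ))
      = (2*(t:ℝ)+2-(N:ℝ)) *
        (((N.choose (t+2) : ℝ) + (N.choose (t+1) : ℝ)) *
         ((N.choose t : ℝ) + (N.choose (t+1) : ℝ))) := by
  have R1 := Rabs N t
  have R2 := Rabs N (t+1)
  have ht : ((t:ℝ)+1) ≠ 0 := by positivity
  apply mul_left_cancel₀ ht
  push_cast at R1 R2 ⊢
  linear_combination (((N:ℝ) - 2*t - 2) * (N.choose (t+1) : ℝ) - (2*(t:ℝ)+3) * (N.choose (t+2) : ℝ)) * R1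
    + (-((N:ℝ)+1) * (N.choose t : ℝ)) * R2

lemma E_scalar (N m : ℕ) :
    ((N:ℝ)+1) * narayanaD (N+1) m - ((N:ℝ)+1) * narayanaD (N+1) (m+1)
      = (2*((N:ℝ)+1)-1-2*(m:ℝ)) * Afun (N+1) m - (2*(m:ℝ)+3) * Afun (N+1) (m+1) := by
  have pascal : ∀ k : ℕ, ((N+1).choose (k+1) : ℝ) = (N.choose k : ℝ) + (N.choose (k+1) : ℝ) := by
    intro k; rw [Nat.choose_succ_succ]; push_cast; ring
  rcases m with _ | t
  · have hb : (N.choose 1 : ℝ) = N := by rw [Nat.choose_one_right]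
    have hc := Rabs N 1
    simp only [narayanaD, Afun, Nat.add_sub_cancel, pascal, Nat.choose_zero_right,
      Nat.choose_self, if_pos rfl, if_neg one_ne_zero] at *
    push_cast at *
    rw [hb] at hc ⊢
    linear_combination ((N:ℝ)+1) * hc
  · have h1 := E2 N t
    have h2 := E2 N (t+1)
    simp only [narayanaD, Afun, Nat.add_sub_cancel, pascal, Nat.succ_sub_one,
      if_neg (Nat.succ_ne_zero t), if_neg (Nat.succ_ne_zero (t+1))] at *
    push_cast at *
    linear_combination (-1 : ℝ) * h1 + (-1 : ℝ) * h2

lemma I1 (N : ℕ) :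
    C ((N:ℝ)+1) * (X * narayanaP (N+1) - narayanaP (N+1))
      = (C (2*((N:ℝ)+1)-1) * (X * Mpoly (N+1)) - Mpoly (N+1))
        - 2 * (X * (X * derivative (Mpoly (N+1))) + X * derivative (Mpoly (N+1))) := by
  have hN1 : (1:ℕ) ≤ N + 1 := le_add_self
  ext k
  simp only [coeff_C_mul, coeff_sub, coeff_add, coeff_ofNat_mul]
  rcases k with _ | k
  · simp only [mul_coeff_zero, coeff_X_zero, zero_mul, coeff_P_s15 hN1, coeff_Mpoly]
    have h0 : narayanaD (N+1) 0 = 1 := by simp [narayanaD]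
    have hA0 : Afun (N+1) 0 = (N:ℝ)+1 := by simp [Afun]
    rw [h0, hA0]; ring
  · simp only [coeff_X_mul, coeff_P_s15 hN1, coeff_Mpoly, coeff_derivative]
    rcases k with _ | j
    · simp only [mul_coeff_zero, coeff_X_zero, zero_mul, coeff_derivative, coeff_Mpoly]
      have := E_scalar N 0
      push_cast at this ⊢
      linear_combination this
    · simp only [coeff_X_mul, coeff_derivative, coeff_Mpoly]
      have := E_scalar N (j+1)
      push_cast at this ⊢
      linear_combination this

lemma Mpoly_eq {n : ℕ} (hn : 1 ≤ n) : Mpoly n = C (n:ℝ) * redNarayana n := by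
  rw [Mpoly, redNarayana, Finset.mul_sum]
  refine Finset.sum_congr rfl fun j _ => ?_
  rw [← mul_assoc, ← C_mul]
  congr 1
  rw [narayanaNum, Afun, Nat.add_sub_cancel]
  have : ((n:ℕ):ℝ) ≠ 0 := by positivity
  field_simp

lemma evalI1 (N : ℕ) (r : ℝ) :
    (r - 1) * (narayanaP (N+1)).eval r
      = ((2*((N:ℝ)+1)-1)*r - 1) * (redNarayana (N+1)).eval r
        - 2*r*(r+1) * ((derivative (redNarayana (N+1))).eval r) := by
  have h := congrArg (eval r) (I1 N)
  rw [Mpoly_eq (le_add_self : (1:ℕ) ≤ N + 1)] at h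
  push_cast at h
  have hder : derivative (C ((N:ℝ)+1) * redNarayana (N+1))
      = C ((N:ℝ)+1) * derivative (redNarayana (N+1)) := by
    rw [derivative_C_mul]
  rw [hder] at h
  simp only [eval_mul, eval_sub, eval_add, eval_C, eval_X, eval_ofNat] at h
  push_cast at h
  have hne : ((N:ℝ)+1) ≠ 0 := by positivity
  apply mul_left_cancel₀ hne
  linear_combination h

lemma coeff_one_sub_X_pow (n k : ℕ) :
    ((1 - X : ℝ[X]) ^ n).coeff k = (-1)^k * (n.choose k : ℝ) := by
  have h1 : ((1 - X : ℝ[X])) ^ n = C ((-1)^n) * (X + C (-1)) ^ n := by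
    rw [map_pow, ← mul_pow]
    congr 1
    rw [C_neg, C_1]
    ring
  rw [h1, coeff_C_mul, coeff_X_add_C_pow]
  rcases le_or_gt k n with h | h
  · have h2 : (-1:ℝ)^n = (-1)^k * (-1)^(n-k) := by rw [← pow_add]; congr 1; omega
    have h3 : ((-1:ℝ))^(n-k) * (-1)^(n-k) = 1 := by rw [← mul_pow]; norm_num
    rw [h2]
    linear_combination ((-1:ℝ)^k * (n.choose k : ℝ)) * h3
  · rw [Nat.choose_eq_zero_of_lt h]
    simp

lemma eval_neg_one (m : ℕ) :
    ((2*m+1 : ℕ) : ℝ) * (redNarayana (2*m+1)).eval (-1)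
      = (-1)^m * ((2*m+1).choose m : ℝ) := by
  set n := 2*m+1 with hn
  have hnR : ((n:ℕ):ℝ) ≠ 0 := by positivity
  have step1 : ((n : ℕ) : ℝ) * (redNarayana n).eval (-1)
      = ∑ j ∈ Finset.range n, (-1)^j * ((n.choose (j+1) : ℝ) * (n.choose j : ℝ)) := by
    rw [redNarayana, eval_finset_sum, Finset.mul_sum]
    refine Finset.sum_congr rfl fun j _ => ?_
    simp only [eval_mul, eval_C, eval_pow, eval_X, narayanaNum, Nat.add_sub_cancel]
    field_simp
  have key : (((X + 1 : ℝ[X])^n * (1 - X)^n)).coeff (n-1)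
      = ∑ j ∈ Finset.range n, (-1)^j * ((n.choose (j+1) : ℝ) * (n.choose j : ℝ)) := by
    rw [coeff_mul, Finset.Nat.sum_antidiagonal_eq_sum_range_succ_mk]
    have hsucc : (n-1).succ = n := by omega
    rw [hsucc, ← Finset.sum_range_reflect]
    refine Finset.sum_congr rfl fun j hj => ?_
    rw [Finset.mem_range] at hj
    have e1 : n - 1 - (n - 1 - j) = j := by omega
    rw [e1, coeff_X_add_one_pow, coeff_one_sub_X_pow]
    have e2 : n - 1 - j = n - (j+1) := by omega
    rw [e2, Nat.choose_symm (by omega : j + 1 ≤ n)]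
    ring
  have key2 : (((X + 1 : ℝ[X])^n * (1 - X)^n)).coeff (n-1)
      = (-1)^m * ((n.choose m : ℝ)) := by
    rw [← mul_pow]
    have hfac : ((X + 1 : ℝ[X]) * (1 - X)) = 1 + (-(X^2)) := by ring
    rw [hfac, add_comm (1:ℝ[X]) (-(X^2)), add_pow, finset_sum_coeff]
    have hpow : ∀ k : ℕ, ((-(X^2) : ℝ[X]))^k = C ((-1:ℝ)^k) * X^(2*k) := by
      intro k
      rw [neg_pow, ← pow_mul]
      congr 1
      rw [map_pow, C_neg, C_1]
    have hterm : ∀ k : ℕ,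
        ((-(X^2) : ℝ[X])^k * 1^(n-k) * (n.choose k : ℝ[X])).coeff (n-1)
          = if n-1 = 2*k then (-1:ℝ)^k * (n.choose k : ℝ) else 0 := by
      intro k
      rw [one_pow, mul_one, ← C_eq_natCast, coeff_mul_C, hpow k, coeff_C_mul, coeff_X_pow]
      split_ifs <;> ring
    rw [Finset.sum_congr rfl (fun k _ => hterm k)]
    rw [Finset.sum_eq_single m]
    · rw [if_pos (by omega : n - 1 = 2*m)]
    · intro k _ hkm
      rw [if_neg (by omega : ¬ (n - 1 = 2*k))]
    · intro hm
      exact absurd (Finset.mem_range.mpr (by omega)) hm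
  rw [step1, ← key, key2]


lemma prod_form (g : ℝ[X]) (m : ℕ) (v : ℕ → ℝ)
    (hmono : ∀ i j : ℕ, i < j → j < m → v i < v j)
    (hdeg : g.natDegree = m) (hlc : g.leadingCoeff = 1)
    (hroots : ∀ i < m, g.eval (v i) = 0) :
    g = ∏ i ∈ Finset.range m, (X - C (v i)) := by
  set q : ℝ[X] := ∏ i ∈ Finset.range m, (X - C (v i)) with hq
  have hqmonic : q.Monic := monic_prod_of_monic _ _ (fun i _ => monic_X_sub_C (v i))
  have hqdeg : q.natDegree = m := by
    rw [hq, natDegree_prod_of_monic _ _ (fun i _ => monic_X_sub_C (v i))]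
    simp [natDegree_X_sub_C]
  have hgmonic : g.Monic := hlc
  by_contra hne
  have hsub : g - q ≠ 0 := sub_ne_zero.mpr hne
  have hdegsub : (g - q).natDegree < m := by
    have h1 : (g - q).degree < g.degree := by
      apply degree_sub_lt
      · rw [degree_eq_natDegree hgmonic.ne_zero, degree_eq_natDegree hqmonic.ne_zero, hdeg, hqdeg]
      · exact hgmonic.ne_zero
      · rw [hlc, hqmonic.leadingCoeff]
    have := Polynomial.natDegree_lt_natDegree hsub h1
    omega
  have hinj : Set.InjOn v (Finset.range m : Set ℕ) := by
    intro i hi j hj hij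
    simp only [Finset.coe_range, Set.mem_Iio] at hi hj
    by_contra hne'
    rcases lt_or_gt_of_ne hne' with h | h
    · exact absurd hij (ne_of_lt (hmono i j h hj))
    · exact absurd hij.symm (ne_of_lt (hmono j i h hi))
  have hcard : (Finset.image v (Finset.range m)).card = m := by
    rw [Finset.card_image_of_injOn hinj, Finset.card_range]
  have hzero : g - q = 0 := by
    apply Polynomial.eq_zero_of_natDegree_lt_card_of_eval_eq_zero' (g - q)
      (Finset.image v (Finset.range m))
    · intro x hx
      rw [Finset.mem_image] at hx
      obtain ⟨i, hi, rfl⟩ := hx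
      rw [Finset.mem_range] at hi
      have hqz : q.eval (v i) = 0 := by
        rw [hq, eval_prod]
        apply Finset.prod_eq_zero (Finset.mem_range.mpr hi)
        simp
      simp [eval_sub, hroots i hi, hqz]
    · rw [hcard]; exact hdegsub
  exact hsub hzero

lemma deriv_sign (m : ℕ) (v : ℕ → ℝ)
    (hmono : ∀ i j : ℕ, i < j → j < m → v i < v j)
    (i : ℕ) (hi : i < m) :
    0 < (-1:ℝ)^(m-1-i) *
      (derivative (∏ j ∈ Finset.range m, (X - C (v j)))).eval (v i) := by
  have hmem : i ∈ Finset.range m := Finset.mem_range.mpr hi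
  have hsplit : ∏ j ∈ Finset.range m, (X - C (v j))
      = (X - C (v i)) * ∏ j ∈ (Finset.range m).erase i, (X - C (v j)) :=
    (Finset.mul_prod_erase _ _ hmem).symm
  have hder : (derivative (∏ j ∈ Finset.range m, (X - C (v j)))).eval (v i)
      = ∏ j ∈ (Finset.range m).erase i, (v i - v (j)) := by
    rw [hsplit, derivative_mul, derivative_X_sub_C]
    simp [eval_prod]
  rw [hder]
  have hun : (Finset.range m).erase i = Finset.range i ∪ Finset.Ico (i+1) m := by
    ext z
    simp only [Finset.mem_erase, Finset.mem_range, Finset.mem_union, Finset.mem_Ico]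
    omega
  have hdisj : Disjoint (Finset.range i) (Finset.Ico (i+1) m) := by
    rw [Finset.disjoint_left]
    intro z hz hz'
    rw [Finset.mem_range] at hz
    rw [Finset.mem_Ico] at hz'
    omega
  rw [hun, Finset.prod_union hdisj]
  have h1 : 0 < ∏ j ∈ Finset.range i, (v i - v j) := by
    apply Finset.prod_pos
    intro j hj
    rw [Finset.mem_range] at hj
    have := hmono j i hj hi
    linarith
  have h2 : ∏ j ∈ Finset.Ico (i+1) m, (v i - v j)
      = (-1:ℝ)^(m-1-i) * ∏ j ∈ Finset.Ico (i+1) m, (v j - v i) := by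
    have : ∀ j ∈ Finset.Ico (i+1) m, (v i - v j) = (-1) * (v j - v i) := by
      intro j _; ring
    rw [Finset.prod_congr rfl this, Finset.prod_mul_distrib, Finset.prod_const]
    congr 2
    rw [Nat.card_Ico]
    omega
  have h3 : 0 < ∏ j ∈ Finset.Ico (i+1) m, (v j - v i) := by
    apply Finset.prod_pos
    intro j hj
    rw [Finset.mem_Ico] at hj
    have := hmono i j hj.1 hj.2
    linarith
  rw [h2]
  have hsq : ((-1:ℝ)^(m-1-i)) * ((-1:ℝ)^(m-1-i)) = 1 := by
    rw [← mul_pow]; norm_num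
  have heq : (-1:ℝ)^(m-1-i) * ((∏ j ∈ Finset.range i, (v i - v j)) *
      ((-1:ℝ)^(m-1-i) * ∏ j ∈ Finset.Ico (i+1) m, (v j - v i)))
      = ((-1:ℝ)^(m-1-i) * ((-1:ℝ)^(m-1-i))) *
        ((∏ j ∈ Finset.range i, (v i - v j)) * ∏ j ∈ Finset.Ico (i+1) m, (v j - v i)) := by
    ring
  rw [heq, hsq, one_mul]
  exact mul_pos h1 h3

theorem stmt_15 (n : ℕ) (hn : 3 ≤ n) (hodd : Odd n)
    (u : ℕ → ℝ)
    (hu : ∀ i j : ℕ, i < j → j < n - 1 → u i < u j)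
    (huroots : ∀ r : ℝ, (redNarayana n).eval r = 0 ↔ ∃ i < n - 1, u i = r) :
    (narayanaP n).eval (-1) ≠ 0 ∧
    (∃ s : ℕ → ℝ, (∀ i j : ℕ, i < j → j < n - 1 → s i < s j) ∧
      (∀ r : ℝ, (narayanaP n).eval r = 0 ↔ ∃ i < n - 1, s i = r)) ∧
    (∃ w : ℕ → ℝ, (∀ i j : ℕ, i < j → j < n → w i < w j) ∧
      (∀ r : ℝ, (r = -1 ∨ (narayanaP n).eval r = 0) ↔ ∃ i < n, w i = r) ∧
      (∀ i < n - 1, w i < u i) ∧ (∀ i < n - 1, u i < w (i + 1))) := by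
  obtain ⟨N, rfl⟩ : ∃ N, n = N + 1 := ⟨n - 1, by omega⟩
  simp only [Nat.add_sub_cancel] at hu huroots ⊢
  obtain ⟨m, hm⟩ : ∃ m, N = 2 * m := by
    obtain ⟨t, ht⟩ := hodd; exact ⟨t, by omega⟩
  have hN2 : 2 ≤ N := by omega
  have hm1 : 1 ≤ m := by omega
  set NN := redNarayana (N+1) with hNN
  set P := narayanaP (N+1) with hP
  -- roots of NN
  have huroot : ∀ i < N, NN.eval (u i) = 0 := fun i hi => (huroots (u i)).mpr ⟨i, hi, rfl⟩
  -- NN is positive on [0, ∞)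
  have hNNpos : ∀ r : ℝ, 0 ≤ r → 0 < NN.eval r := by
    intro r hr
    rw [hNN, redNarayana, eval_finset_sum]
    apply Finset.sum_pos'
    · intro j _
      simp only [eval_mul, eval_C, eval_pow, eval_X]
      apply mul_nonneg _ (pow_nonneg hr j)
      apply div_nonneg (by positivity) (by positivity)
    · refine ⟨0, Finset.mem_range.mpr (by omega), ?_⟩
      simp [narayanaNum]
      positivity
  have hupos : ∀ i < N, u i < 0 := by
    intro i hi
    by_contra hge
    exact absurd (huroot i hi) (ne_of_gt (hNNpos (u i) (by linarith [not_lt.mp hge])))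
  -- NN does not vanish at -1
  have hNneg1 : NN.eval (-1) ≠ 0 := by
    intro hzero
    have := eval_neg_one m
    rw [show 2*m+1 = N+1 by omega] at this
    rw [hNN] at hzero
    rw [hzero, mul_zero] at this
    have hch : 0 < ((N+1).choose m : ℝ) := by
      exact_mod_cast Nat.choose_pos (by omega : m ≤ N+1)
    rcases Nat.even_or_odd m with he | ho
    · rw [he.neg_one_pow] at this; linarith
    · rw [ho.neg_one_pow] at this; linarith
  have hune1 : ∀ i < N, u i ≠ -1 := by
    intro i hi heq
    exact hNneg1 (heq ▸ huroot i hi)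
  -- P(-1) = (N+1) * NN(-1) ≠ 0
  have hPeval : ∀ r : ℝ, (r - 1) * P.eval r
      = ((2*((N:ℝ)+1)-1)*r - 1) * NN.eval r - 2*r*(r+1) * ((derivative NN).eval r) :=
    fun r => evalI1 N r
  have hPneg1 : P.eval (-1) = ((N:ℝ)+1) * NN.eval (-1) := by
    have := hPeval (-1)
    norm_num at this
    linarith
  have hPne1 : P.eval (-1) ≠ 0 := by
    rw [hPneg1]
    exact mul_ne_zero (by positivity) hNneg1
  refine ⟨hPne1, ?_⟩
  -- degree facts for NN
  have hNdegle : NN.natDegree ≤ N := by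
    apply Polynomial.natDegree_le_iff_coeff_eq_zero.mpr
    intro k hk
    rw [hNN, redNarayana, coeff_sum_range]
    rw [if_neg (by omega)]
  have hNcoeffN : NN.coeff N = 1 := by
    rw [hNN, redNarayana, coeff_sum_range, if_pos (by omega)]
    simp only [narayanaNum, Nat.add_sub_cancel, Nat.choose_self, Nat.choose_succ_self_right]
    push_cast
    field_simp
  have hNdeg : NN.natDegree = N :=
    le_antisymm hNdegle (le_natDegree_of_ne_zero (by rw [hNcoeffN]; norm_num))
  have hNlc : NN.leadingCoeff = 1 := by
    rw [Polynomial.leadingCoeff, hNdeg, hNcoeffN]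
  -- product form
  have hprod : NN = ∏ i ∈ Finset.range N, (X - C (u i)) :=
    prod_form NN N u hu hNdeg hNlc huroot
  -- derivative signs
  have hdersign : ∀ i < N, 0 < (-1:ℝ)^(N-1-i) * (derivative NN).eval (u i) := by
    intro i hi
    rw [hprod]
    exact deriv_sign N u hu i hi
  -- Q and its signs
  set Q : ℝ[X] := (X + 1) * P with hQ
  have hQeval : ∀ r : ℝ, Q.eval r = (r + 1) * P.eval r := by
    intro r; rw [hQ]; simp
  have hQsign : ∀ i < N, (-1:ℝ)^(N-1-i) * Q.eval (u i) < 0 := by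
    intro i hi
    have h1 := hPeval (u i)
    rw [huroot i hi, mul_zero, zero_sub] at h1
    have hd := hdersign i hi
    set ε : ℝ := (-1:ℝ)^(N-1-i) with hε
    set d : ℝ := (derivative NN).eval (u i) with hdd
    have hQu : (u i - 1) * Q.eval (u i) = -2 * u i * (u i + 1)^2 * d := by
      rw [hQeval]
      linear_combination (u i + 1) * h1
    have hune : u i + 1 ≠ 0 := fun hc => (hune1 i hi) (by linarith)
    have hsq : 0 < (u i + 1)^2 := by positivity
    have hup := hupos i hi
    have hεQ : (u i - 1) * (ε * Q.eval (u i)) = -2 * u i * (u i + 1)^2 * (ε * d) := by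
      linear_combination ε * hQu
    have hrhs : 0 < -2 * u i * (u i + 1)^2 * (ε * d) :=
      mul_pos (mul_pos (by linarith : (0:ℝ) < -2 * u i) hsq) hd
    have h5 : 0 < (u i - 1) * (ε * Q.eval (u i)) := hεQ ▸ hrhs
    nlinarith [h5, hup]
  -- degree facts for P and Q
  have hPdegle : P.natDegree ≤ N := by
    apply Polynomial.natDegree_le_iff_coeff_eq_zero.mpr
    intro k hk
    rw [hP, coeff_P_s15 (by omega), narayanaD_eq_zero (by omega) (by omega)]
  have hPcoeffN : P.coeff N = 1 := by
    rw [hP, coeff_P_s15 (by omega)]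
    have h1 : (N+1-1).choose (N+1) = 0 := Nat.choose_eq_zero_of_lt (by omega)
    simp [narayanaD, h1, Nat.choose_self, if_neg (by omega : ¬ (N = 0))]
  have hPdeg : P.natDegree = N :=
    le_antisymm hPdegle (le_natDegree_of_ne_zero (by rw [hPcoeffN]; norm_num))
  have hPmonic : P.Monic := by
    rw [Polynomial.Monic, Polynomial.leadingCoeff, hPdeg, hPcoeffN]
  have hX1monic : (X + 1 : ℝ[X]).Monic := by
    have := monic_X_add_C (1:ℝ)
    rwa [C_1] at this
  have hQmonic : Q.Monic := hX1monic.mul hPmonic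
  have hQdeg : Q.natDegree = N + 1 := by
    rw [hQ, Polynomial.natDegree_mul hX1monic.ne_zero hPmonic.ne_zero, hPdeg]
    have : (X + 1 : ℝ[X]).natDegree = 1 := by
      have := natDegree_X_add_C (1:ℝ)
      rwa [C_1] at this
    omega
  have hQne : Q ≠ 0 := hQmonic.ne_zero
  have hQdegpos : 0 < Q.degree := by
    rw [degree_eq_natDegree hQne, hQdeg]
    exact_mod_cast Nat.succ_pos N
  -- IVT helper
  have hIVT : ∀ (a b : ℝ), a < b → Q.eval a * Q.eval b < 0 →
      ∃ c, a < c ∧ c < b ∧ Q.eval c = 0 := by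
    intro a b hab hpr
    have hcont : ContinuousOn (fun x => Q.eval x) (Set.Icc a b) :=
      (Polynomial.continuous Q).continuousOn
    rcases lt_or_ge (Q.eval a) 0 with ha | ha
    · have hb : 0 < Q.eval b := by nlinarith
      have := intermediate_value_Ioo hab.le hcont
      have h0 : (0:ℝ) ∈ Set.Ioo (Q.eval a) (Q.eval b) := ⟨ha, hb⟩
      obtain ⟨c, hc, hceq⟩ := this h0
      exact ⟨c, hc.1, hc.2, hceq⟩
    · have ha' : 0 < Q.eval a := by
        rcases ha.eq_or_lt with h | h
        · exfalso; rw [← h, zero_mul] at hpr; exact lt_irrefl 0 hpr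
        · exact h
      have hb : Q.eval b < 0 := by nlinarith
      have := intermediate_value_Ioo' hab.le hcont
      have h0 : (0:ℝ) ∈ Set.Ioo (Q.eval b) (Q.eval a) := ⟨hb, ha'⟩
      obtain ⟨c, hc, hceq⟩ := this h0
      exact ⟨c, hc.1, hc.2, hceq⟩
  -- middle roots
  have hmid : ∀ i, i + 1 < N → ∃ c, u i < c ∧ c < u (i+1) ∧ Q.eval c = 0 := by
    intro i hi
    apply hIVT _ _ (hu i (i+1) (Nat.lt_succ_self i) hi)
    set k := N - 1 - (i+1) with hk
    have hs1 := hQsign i (by omega)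
    have hs2 := hQsign (i+1) hi
    rw [show N - 1 - i = k + 1 by omega, pow_succ] at hs1
    rw [show N - 1 - (i+1) = k from rfl] at hs2
    have ha : 0 < (-1:ℝ)^k * Q.eval (u i) := by nlinarith [hs1]
    have hsqk : (-1:ℝ)^k * (-1)^k = 1 := by rw [← mul_pow]; norm_num
    have key : ((-1:ℝ)^k * Q.eval (u i)) * ((-1:ℝ)^k * Q.eval (u (i+1)))
        = Q.eval (u i) * Q.eval (u (i+1)) := by
      rw [show ((-1:ℝ)^k * Q.eval (u i)) * ((-1:ℝ)^k * Q.eval (u (i+1)))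
        = ((-1:ℝ)^k * (-1)^k) * (Q.eval (u i) * Q.eval (u (i+1))) from by ring, hsqk, one_mul]
    rw [← key]
    exact mul_neg_of_pos_of_neg ha hs2
  -- rightmost root
  have hlast : ∃ c, u (N-1) < c ∧ Q.eval c = 0 := by
    have hQlast : Q.eval (u (N-1)) < 0 := by
      have := hQsign (N-1) (by omega)
      rwa [show N - 1 - (N-1) = 0 by omega, pow_zero, one_mul] at this
    have htop : Filter.Tendsto (fun x => Q.eval x) Filter.atTop Filter.atTop :=
      Q.tendsto_atTop_of_leadingCoeff_nonneg hQdegpos (by rw [hQmonic.leadingCoeff]; norm_num)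
    have hev : ∀ᶠ x in Filter.atTop, 1 ≤ Q.eval x ∧ u (N-1) + 1 ≤ x :=
      (htop.eventually_ge_atTop 1).and (Filter.eventually_ge_atTop (u (N-1) + 1))
    obtain ⟨b, hb1, hb2⟩ := hev.exists
    obtain ⟨c, hc1, hc2, hc3⟩ := hIVT (u (N-1)) b (by linarith)
      (by nlinarith [hQlast, hb1])
    exact ⟨c, hc1, hc3⟩
  -- leftmost root
  have hfirst : ∃ c, c < u 0 ∧ Q.eval c = 0 := by
    have hoddN1 : Odd (N - 1) := ⟨m - 1, by omega⟩
    have hQ0 : 0 < Q.eval (u 0) := by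
      have := hQsign 0 (by omega)
      rw [show N - 1 - 0 = N - 1 by omega, hoddN1.neg_one_pow] at this
      linarith
    set Qc : ℝ[X] := Q.comp (-X) with hQc
    have hQceval : ∀ x : ℝ, Qc.eval x = Q.eval (-x) := by
      intro x; rw [hQc, eval_comp]; simp
    have hnegXdeg : (-X : ℝ[X]).natDegree = 1 := by
      rw [natDegree_neg, natDegree_X]
    have hQcdeg : Qc.natDegree = N + 1 := by
      rw [hQc, natDegree_comp, hnegXdeg, hQdeg, mul_one]
    have hQcne : Qc ≠ 0 := by
      intro h
      have h1 := hQceval (-(u 0))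
      rw [h, eval_zero, neg_neg] at h1
      exact absurd h1.symm (ne_of_gt hQ0)
    have hQclc : Qc.leadingCoeff = -1 := by
      rw [hQc, Polynomial.leadingCoeff_comp (by rw [hnegXdeg]; omega), hQmonic.leadingCoeff,
        hQdeg, one_mul]
      have hlcX : (-X : ℝ[X]).leadingCoeff = -1 := by
        rw [leadingCoeff_neg, leadingCoeff_X]
      rw [hlcX, hodd.neg_one_pow]
    have hQcdegpos : 0 < Qc.degree := by
      rw [degree_eq_natDegree hQcne, hQcdeg]
      exact_mod_cast Nat.succ_pos N
    have hbot : Filter.Tendsto (fun x => Qc.eval x) Filter.atTop Filter.atBot :=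
      Qc.tendsto_atBot_of_leadingCoeff_nonpos hQcdegpos (by rw [hQclc]; norm_num)
    have hev : ∀ᶠ x in Filter.atTop, Qc.eval x ≤ -1 ∧ -(u 0) + 1 ≤ x :=
      (hbot.eventually_le_atBot (-1)).and (Filter.eventually_ge_atTop (-(u 0) + 1))
    obtain ⟨b, hb1, hb2⟩ := hev.exists
    rw [hQceval] at hb1
    obtain ⟨c, hc1, hc2, hc3⟩ := hIVT (-b) (u 0) (by linarith) (by nlinarith [hQ0, hb1])
    exact ⟨c, hc2, hc3⟩
  -- construct w
  have hmid' : ∀ i : ℕ, ∃ c, i + 1 < N → (u i < c ∧ c < u (i+1) ∧ Q.eval c = 0) := by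
    intro i
    by_cases h : i + 1 < N
    · obtain ⟨c, hc⟩ := hmid i h; exact ⟨c, fun _ => hc⟩
    · exact ⟨0, fun hc => absurd hc h⟩
  choose mid hmidspec using hmid'
  obtain ⟨w0, hw0lt, hw0root⟩ := hfirst
  obtain ⟨wl, hwllt, hwlroot⟩ := hlast
  set w : ℕ → ℝ := fun i => if i = 0 then w0 else if i ≤ N - 1 then mid (i-1) else wl with hw
  have hwa : ∀ i < N, w i < u i := by
    intro i hi
    rcases Nat.eq_zero_or_pos i with rfl | hipos
    · simpa [hw] using hw0lt
    · have hwi : w i = mid (i-1) := by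
        rw [hw]; simp only [if_neg (by omega : ¬ i = 0), if_pos (by omega : i ≤ N - 1)]
      have hspec := hmidspec (i-1) (by omega : i - 1 + 1 < N)
      rw [show i - 1 + 1 = i by omega] at hspec
      rw [hwi]
      exact hspec.2.1
  have hwb : ∀ i < N, u i < w (i+1) := by
    intro i hi
    rcases eq_or_lt_of_le (Nat.succ_le_of_lt hi) with heq | hlt
    · have hwi : w (i+1) = wl := by
        rw [hw]; simp only [if_neg (by omega : ¬ i + 1 = 0), if_neg (by omega : ¬ i + 1 ≤ N - 1)]
      rw [hwi, show i = N - 1 by omega]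
      exact hwllt
    · have hwi : w (i+1) = mid i := by
        rw [hw]
        simp only [if_neg (by omega : ¬ i + 1 = 0), if_pos (by omega : i + 1 ≤ N - 1)]
        norm_num
      have hspec := hmidspec i (by omega : i + 1 < N)
      rw [hwi]
      exact hspec.1
  have hwroot : ∀ i < N + 1, Q.eval (w i) = 0 := by
    intro i hi
    rcases Nat.eq_zero_or_pos i with rfl | hipos
    · simpa [hw] using hw0root
    · by_cases h2 : i ≤ N - 1
      · have hwi : w i = mid (i-1) := by
          rw [hw]; simp only [if_neg (by omega : ¬ i = 0), if_pos h2]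
        have hspec := hmidspec (i-1) (by omega : i - 1 + 1 < N)
        rw [hwi]
        exact hspec.2.2
      · have hwi : w i = wl := by
          rw [hw]; simp only [if_neg (by omega : ¬ i = 0), if_neg h2]
        rw [hwi]
        exact hwlroot
  have hwstep : ∀ k, k < N → w k < w (k+1) := fun k hk =>
    lt_trans (hwa k hk) (hwb k hk)
  have hwmono : ∀ i j : ℕ, i < j → j < N + 1 → w i < w j := by
    intro i j hij hj
    have key : ∀ d : ℕ, ∀ jj : ℕ, jj = i + 1 + d → jj < N + 1 → w i < w jj := by
      intro d
      induction d with
      | zero =>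
        intro jj h1 h2
        subst h1
        exact hwstep i (by omega)
      | succ t ih =>
        intro jj h1 h2
        subst h1
        exact lt_trans (ih (i+1+t) rfl (by omega)) (hwstep (i+1+t) (by omega))
    exact key (j - i - 1) j (by omega) hj
  -- all roots of Q are the w i
  have himg : Finset.image w (Finset.range (N+1)) ⊆ Q.roots.toFinset := by
    intro r hr
    rw [Finset.mem_image] at hr
    obtain ⟨i, hi, rfl⟩ := hr
    rw [Finset.mem_range] at hi
    rw [Multiset.mem_toFinset, Polynomial.mem_roots hQne]
    exact hwroot i hi
  have hwinj : Set.InjOn w (Finset.range (N+1) : Set ℕ) := by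
    intro i hi j hj hij
    simp only [Finset.coe_range, Set.mem_Iio] at hi hj
    by_contra hne'
    rcases lt_or_gt_of_ne hne' with h | h
    · exact absurd hij (ne_of_lt (hwmono i j h hj))
    · exact absurd hij.symm (ne_of_lt (hwmono j i h hi))
  have hcardw : (Finset.image w (Finset.range (N+1))).card = N + 1 := by
    rw [Finset.card_image_of_injOn hwinj, Finset.card_range]
  have hcardle : Q.roots.toFinset.card ≤ N + 1 := by
    refine le_trans (Multiset.toFinset_card_le _) (le_trans (Polynomial.card_roots' Q) ?_)
    rw [hQdeg]
  have heqset : Finset.image w (Finset.range (N+1)) = Q.roots.toFinset :=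
    Finset.eq_of_subset_of_card_le himg (by rw [hcardw]; exact hcardle)
  have hQroots : ∀ r : ℝ, Q.eval r = 0 ↔ ∃ i < N + 1, w i = r := by
    intro r
    constructor
    · intro hr
      have : r ∈ Q.roots.toFinset := Multiset.mem_toFinset.mpr ((Polynomial.mem_roots hQne).mpr hr)
      rw [← heqset, Finset.mem_image] at this
      obtain ⟨i, hi, hwi⟩ := this
      exact ⟨i, Finset.mem_range.mp hi, hwi⟩
    · rintro ⟨i, hi, rfl⟩
      exact hwroot i hi
  have hQzero : ∀ r : ℝ, Q.eval r = 0 ↔ (r = -1 ∨ P.eval r = 0) := by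
    intro r
    rw [hQeval]
    rw [mul_eq_zero]
    constructor
    · rintro (h | h)
      · left; linarith
      · right; exact h
    · rintro (rfl | h)
      · left; ring
      · right; exact h
  -- the s part
  obtain ⟨k, hkN, hwk⟩ : ∃ k < N + 1, w k = -1 := by
    rw [← hQroots (-1)]
    rw [hQeval]
    ring
  set sf : ℕ → ℝ := fun i => if i < k then w i else w (i+1) with hsf
  have hsmono : ∀ i j : ℕ, i < j → j < N → sf i < sf j := by
    intro i j hij hj
    rw [hsf]
    by_cases hik : i < k
    · by_cases hjk : j < k
      · simp only [if_pos hik, if_pos hjk]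
        exact hwmono i j hij (by omega)
      · simp only [if_pos hik, if_neg hjk]
        exact hwmono i (j+1) (by omega) (by omega)
    · have hjk : ¬ j < k := by omega
      simp only [if_neg hik, if_neg hjk]
      exact hwmono (i+1) (j+1) (by omega) (by omega)
  have hsroots : ∀ r : ℝ, P.eval r = 0 ↔ ∃ i < N, sf i = r := by
    intro r
    constructor
    · intro hr
      have hrne : r ≠ -1 := by
        intro h; rw [h] at hr; exact hPne1 hr
      obtain ⟨j, hj, hwj⟩ := (hQroots r).mp ((hQzero r).mpr (Or.inr hr))
      have hjk : j ≠ k := by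
        intro h; rw [h, hwk] at hwj; exact hrne hwj.symm
      rcases lt_or_gt_of_ne hjk with h | h
      · refine ⟨j, by omega, ?_⟩
        rw [hsf]; simp only [if_pos h]; exact hwj
      · refine ⟨j - 1, by omega, ?_⟩
        rw [hsf]; simp only [if_neg (by omega : ¬ j - 1 < k)]
        rw [show j - 1 + 1 = j by omega]
        exact hwj
    · rintro ⟨i, hi, rfl⟩
      by_cases hik : i < k
      · have hsi : sf i = w i := by rw [hsf]; simp only [if_pos hik]
        have hne : w i ≠ -1 := by
          rw [← hwk]
          exact ne_of_lt (hwmono i k hik hkN)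
        have hq := (hQzero (w i)).mp (hwroot i (by omega))
        rw [hsi]
        rcases hq with h | h
        · exact absurd h hne
        · exact h
      · have hsi : sf i = w (i+1) := by rw [hsf]; simp only [if_neg hik]
        have hne : w (i+1) ≠ -1 := by
          rw [← hwk]
          exact (ne_of_lt (hwmono k (i+1) (by omega) (by omega))).symm
        have hq := (hQzero (w (i+1))).mp (hwroot (i+1) (by omega))
        rw [hsi]
        rcases hq with h | h
        · exact absurd h hne
        · exact h
  refine ⟨⟨sf, hsmono, hsroots⟩, ⟨w, hwmono, ?_, hwa, hwb⟩⟩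
  intro r
  rw [← hQzero r]
  exact hQroots r
end

section
/- Let n ≥ 2 be an even integer and let 𝒫_n(x) = Σ_{j=0}^{n−1} d_{n,j} x^j with d_{n,j} = C(n−1,j)^2 + C(n−1,j+1)·C(n−1,j−1). Then 𝒩_n(−1) = 0 and 𝒫_n(−1) = 0, i.e. 𝒫_n and 𝒩_n share the common zero x = −1; moreover, 𝒫_n has n−1 real simple zeros and, writing w_1 < ⋯ < w_{n−1} for the zeros of 𝒫_n and u_1 < ⋯ < u_{n−2} for the zeros of the quotient polynomial Q_n defined by (x+1)Q_n(x) = 𝒩_n(x), one has w_1 < u_1 < w_2 < u_2 < ⋯ < u_{n−2} < w_{n−1}, i.e. 𝒫_n(x) ≺ 𝒩_n(x)/(x+1). -/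
open Polynomial

lemma coeff_redNarayana (n k : ℕ) :
    (redNarayana n).coeff k = if k < n then narayanaNum n (k + 1) else 0 := by
  simp [redNarayana, Polynomial.finset_sum_coeff, Polynomial.coeff_C_mul,
    Polynomial.coeff_X_pow, Finset.sum_ite_eq' (Finset.range n) k]

lemma coeff_narayanaP (n k : ℕ) :
    (narayanaP n).coeff k = if k < n then narayanaD n k else 0 := by
  simp [narayanaP, Polynomial.finset_sum_coeff, Polynomial.coeff_C_mul,
    Polynomial.coeff_X_pow, Finset.sum_ite_eq' (Finset.range n) k]

lemma main_scalar (n j : ℕ) (hn : 2 ≤ n) (hj : j ≤ n - 2) :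
    narayanaD n (j+1) - narayanaD n j
      = (2*((j:ℝ)+1)+1) * narayanaNum n (j+2) + (2*((j:ℝ)+1) - 2*(n:ℝ) - 1) * narayanaNum n (j+1) := by
  have hn1 : 1 ≤ n := by omega
  have f1 : n * (n-1).choose j = n.choose (j+1) * (j+1) := by
    have := Nat.add_one_mul_choose_eq (n-1) j
    rwa [Nat.sub_add_cancel hn1] at this
  have f2 : n * (n-1).choose (j+1) = n.choose (j+2) * (j+2) := by
    have := Nat.add_one_mul_choose_eq (n-1) (j+1)
    rwa [Nat.sub_add_cancel hn1] at this
  have f3 : n * (n-1).choose (j+2) = n.choose (j+3) * (j+3) := by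
    have := Nat.add_one_mul_choose_eq (n-1) (j+2)
    rwa [Nat.sub_add_cancel hn1] at this
  have f5 : n.choose (j+1) * (j+1) = n.choose j * (n - j) := Nat.choose_succ_right_eq n j
  have f6 : n.choose (j+2) * (j+2) = n.choose (j+1) * (n - (j+1)) := Nat.choose_succ_right_eq n (j+1)
  have f7 : n.choose (j+3) * (j+3) = n.choose (j+2) * (n - (j+2)) := Nat.choose_succ_right_eq n (j+2)
  set N : ℝ := (n : ℝ)
  set J : ℝ := (j : ℝ)
  set b0 : ℝ := (n.choose j : ℝ)
  set b1 : ℝ := (n.choose (j+1) : ℝ)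
  set b2 : ℝ := (n.choose (j+2) : ℝ)
  set b3 : ℝ := (n.choose (j+3) : ℝ)
  have hN0 : N ≠ 0 := by
    have : 0 < n := by omega
    simp only [N]; positivity
  have hJ1 : J + 1 ≠ 0 := by positivity
  have hJ2 : J + 2 ≠ 0 := by positivity
  have hJ3 : J + 3 ≠ 0 := by positivity
  have cNJ : ((n - j : ℕ) : ℝ) = N - J := by
    have : j ≤ n := by omega
    push_cast [Nat.cast_sub this]; ring
  have cNJ1 : ((n - (j+1) : ℕ) : ℝ) = N - J - 1 := by
    have : j + 1 ≤ n := by omega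
    push_cast [Nat.cast_sub this]; ring
  have cNJ2 : ((n - (j+2) : ℕ) : ℝ) = N - J - 2 := by
    have : j + 2 ≤ n := by omega
    push_cast [Nat.cast_sub this]; ring
  have hb1 : b1 = b0 * (N - J) / (J + 1) := by
    rw [eq_div_iff hJ1]
    have := congrArg (fun t : ℕ => (t : ℝ)) f5
    push_cast [cNJ] at this
    linarith [this]
  have hb2 : b2 = b1 * (N - J - 1) / (J + 2) := by
    rw [eq_div_iff hJ2]
    have := congrArg (fun t : ℕ => (t : ℝ)) f6
    push_cast [cNJ1] at this
    linarith [this]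
  have hb3 : b3 = b2 * (N - J - 2) / (J + 3) := by
    rw [eq_div_iff hJ3]
    have := congrArg (fun t : ℕ => (t : ℝ)) f7
    push_cast [cNJ2] at this
    linarith [this]
  have hD0 : ((n-1).choose j : ℝ) = b1 * (J + 1) / N := by
    rw [eq_div_iff hN0]
    have := congrArg (fun t : ℕ => (t : ℝ)) f1
    push_cast at this
    linarith [this]
  have hD1 : ((n-1).choose (j+1) : ℝ) = b2 * (J + 2) / N := by
    rw [eq_div_iff hN0]
    have := congrArg (fun t : ℕ => (t : ℝ)) f2
    push_cast at this
    linarith [this]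
  have hD2 : ((n-1).choose (j+2) : ℝ) = b3 * (J + 3) / N := by
    rw [eq_div_iff hN0]
    have := congrArg (fun t : ℕ => (t : ℝ)) f3
    push_cast at this
    linarith [this]
  have hDm1 : (if j = 0 then (0:ℝ) else ((n-1).choose (j-1) : ℝ)) = b0 * J / N := by
    rcases Nat.eq_zero_or_pos j with hj0 | hj0
    · subst hj0; rw [if_pos rfl]; simp [J]
    · rw [if_neg (by omega)]
      rw [eq_div_iff hN0]
      have f4 : n * (n-1).choose (j-1) = n.choose j * j := by
        have := Nat.add_one_mul_choose_eq (n-1) (j-1)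
        rw [Nat.sub_add_cancel hn1,
          Nat.sub_add_cancel hj0] at this
        exact this
      have := congrArg (fun t : ℕ => (t : ℝ)) f4
      push_cast at this
      linarith [this]
  have hc2 : narayanaNum n (j+2) = b2 * b1 / N := by
    simp only [narayanaNum, show j+2-1 = j+1 from rfl]
    rfl
  have hc1 : narayanaNum n (j+1) = b1 * b0 / N := by
    simp only [narayanaNum, show j+1-1 = j from rfl]
    rfl
  have hd1 : narayanaD n (j+1) = (b2*(J+2)/N)^2 + (b3*(J+3)/N) * (b1*(J+1)/N) := by
    simp only [narayanaD, show j+1+1 = j+2 from rfl, show j+1-1 = j from rfl,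
      if_neg (Nat.succ_ne_zero j)]
    rw [hD1, hD2, hD0]
  have hd0 : narayanaD n j = (b1*(J+1)/N)^2 + (b2*(J+2)/N) * (b0*J/N) := by
    simp only [narayanaD]
    rw [hD0, hD1, hDm1]
  rw [hd1, hd0, hc1, hc2, hb3, hb2, hb1]
  field_simp
  ring

lemma coeff_X_mul'' (p : Polynomial ℝ) (k : ℕ) :
    (Polynomial.X * p).coeff k = if k = 0 then 0 else p.coeff (k-1) := by
  cases k with
  | zero => simp
  | succ m => simp [Polynomial.coeff_X_mul]

lemma narayanaNum_one (n : ℕ) (hn : 2 ≤ n) : narayanaNum n 1 = 1 := by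
  have : (0:ℝ) < n := by exact_mod_cast (by omega : 0 < n)
  simp [narayanaNum]
  omega

lemma narayanaNum_top (n : ℕ) (hn : 2 ≤ n) : narayanaNum n n = 1 := by
  have : (0:ℝ) < n := by exact_mod_cast (by omega : 0 < n)
  have h1 : n.choose (n-1) = n := by
    rw [Nat.choose_symm (by omega : 1 ≤ n), Nat.choose_one_right]
  simp [narayanaNum, h1, Nat.choose_self]
  omega

lemma narayanaD_zero (n : ℕ) (hn : 2 ≤ n) : narayanaD n 0 = 1 := by
  simp [narayanaD]

lemma narayanaD_top (n : ℕ) (hn : 2 ≤ n) : narayanaD n (n-1) = 1 := by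
  have h1 : (n-1).choose (n-1) = 1 := Nat.choose_self _
  have h2 : (n-1).choose (n-1+1) = 0 := Nat.choose_eq_zero_of_lt (by omega)
  simp [narayanaD, h1, h2]

lemma key_identity (n : ℕ) (hn : 2 ≤ n) :
    (1 - Polynomial.X) * narayanaP n
      = (1 - Polynomial.C (2*(n:ℝ)-1) * Polynomial.X) * redNarayana n
        + (2*Polynomial.X + 2*Polynomial.X^2) * Polynomial.derivative (redNarayana n) := by
  have expand : ∀ k : ℕ, ((1 - Polynomial.C (2*(n:ℝ)-1) * Polynomial.X) * redNarayana n
        + (2*Polynomial.X + 2*Polynomial.X^2) * Polynomial.derivative (redNarayana n)).coeff k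
      = (redNarayana n).coeff k - (2*(n:ℝ)-1) * (Polynomial.X * redNarayana n).coeff k
        + 2 * (Polynomial.X * Polynomial.derivative (redNarayana n)).coeff k
        + 2 * (Polynomial.X * (Polynomial.X * Polynomial.derivative (redNarayana n))).coeff k := by
    intro k
    have hC2 : (Polynomial.C (2:ℝ)) = 2 := map_ofNat Polynomial.C 2
    have : (1 - Polynomial.C (2*(n:ℝ)-1) * Polynomial.X) * redNarayana n
        + (2*Polynomial.X + 2*Polynomial.X^2) * Polynomial.derivative (redNarayana n)
      = redNarayana n - Polynomial.C (2*(n:ℝ)-1) * (Polynomial.X * redNarayana n)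
        + Polynomial.C 2 * (Polynomial.X * Polynomial.derivative (redNarayana n))
        + Polynomial.C 2 * (Polynomial.X * (Polynomial.X * Polynomial.derivative (redNarayana n))) := by
      rw [hC2]; ring
    rw [this]
    simp only [Polynomial.coeff_add, Polynomial.coeff_sub, Polynomial.coeff_C_mul]
  apply Polynomial.ext
  intro k
  have lhs_eq : ((1 - Polynomial.X) * narayanaP n).coeff k
      = (narayanaP n).coeff k - (if k = 0 then 0 else (narayanaP n).coeff (k-1)) := by
    have : (1 - Polynomial.X) * narayanaP n = narayanaP n - Polynomial.X * narayanaP n := by ring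
    rw [this]
    simp [coeff_X_mul'']
  rw [lhs_eq, expand]
  cases k with
  | zero =>
    simp only [if_pos rfl, coeff_X_mul'']
    simp [coeff_narayanaP, coeff_redNarayana, Polynomial.coeff_derivative, coeff_X_mul'',
      narayanaD_zero n hn, narayanaNum_one n hn, show 0 < n by omega]
  | succ j =>
    have hder : ∀ m : ℕ, (Polynomial.derivative (redNarayana n)).coeff m
        = ((m:ℝ)+1) * (redNarayana n).coeff (m+1) := by
      intro m; rw [Polynomial.coeff_derivative]; ring
    have hXd : (if j = 0 then (0:ℝ) else (Polynomial.derivative (redNarayana n)).coeff (j-1))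
        = (j : ℝ) * (redNarayana n).coeff j := by
      rcases Nat.eq_zero_or_pos j with h0 | h0
      · subst h0; simp [coeff_redNarayana, show 0 < n by omega]
      · rw [if_neg (by omega), hder (j-1)]
        have h1 : (j - 1 + 1 : ℕ) = j := by omega
        rw [h1]
        have hcast : ((j-1 : ℕ) : ℝ) + 1 = (j : ℝ) := by
          have : (1:ℕ) ≤ j := h0
          push_cast [Nat.cast_sub this]; ring
        rw [hcast]
    simp only [coeff_X_mul'', if_neg (Nat.succ_ne_zero j), Nat.add_sub_cancel]
    rw [hXd, hder j]
    rcases lt_trichotomy (j+1) n with hlt | heq | hgt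
    · have hj : j ≤ n - 2 := by omega
      rw [coeff_narayanaP, coeff_narayanaP, coeff_redNarayana, coeff_redNarayana,
        if_pos hlt, if_pos (by omega : j < n), if_pos hlt, if_pos (by omega : j < n)]
      have := main_scalar n j hn hj
      have hidx : j + 1 + 1 = j + 2 := rfl
      rw [hidx]
      linarith [this]
    · have hj : j = n - 1 := by omega
      rw [coeff_narayanaP, coeff_narayanaP, coeff_redNarayana, coeff_redNarayana,
        if_neg (by omega : ¬ j+1 < n), if_pos (by omega : j < n),
        if_neg (by omega : ¬ j+1 < n), if_pos (by omega : j < n)]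
      subst hj
      have h1 : narayanaD n (n-1) = 1 := narayanaD_top n hn
      have h2 : narayanaNum n (n-1+1) = 1 := by
        have h3 : n - 1 + 1 = n := by omega
        rw [h3]; exact narayanaNum_top n hn
      rw [h1, h2]
      have : ((n-1 : ℕ) : ℝ) = (n:ℝ) - 1 := by
        push_cast [Nat.cast_sub (by omega : 1 ≤ n)]; ring
      rw [this]; ring
    · rw [coeff_narayanaP, coeff_narayanaP, coeff_redNarayana, coeff_redNarayana,
        if_neg (by omega), if_neg (by omega), if_neg (by omega), if_neg (by omega)]
      ring

lemma eval_redNarayana (n : ℕ) (t : ℝ) :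
    (redNarayana n).eval t = ∑ j ∈ Finset.range n, narayanaNum n (j+1) * t^j := by
  simp [redNarayana, Polynomial.eval_finset_sum]

lemma eval_narayanaP (n : ℕ) (t : ℝ) :
    (narayanaP n).eval t = ∑ j ∈ Finset.range n, narayanaD n j * t^j := by
  simp [narayanaP, Polynomial.eval_finset_sum]

lemma narayanaNum_nonneg (n k : ℕ) : 0 ≤ narayanaNum n k := by
  unfold narayanaNum; positivity

lemma redNarayana_pos (n : ℕ) (hn : 2 ≤ n) (t : ℝ) (ht : 0 ≤ t) :
    0 < (redNarayana n).eval t := by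
  rw [eval_redNarayana]
  apply Finset.sum_pos'
  · intro i _
    have := narayanaNum_nonneg n (i+1)
    positivity
  · refine ⟨0, Finset.mem_range.mpr (by omega), ?_⟩
    simp [narayanaNum_one n hn]

lemma narayanaNum_symm (n j : ℕ) (hj : j < n) :
    narayanaNum n (n - 1 - j + 1) = narayanaNum n (j + 1) := by
  have h1 : n - 1 - j + 1 = n - j := by omega
  rw [h1]
  simp only [narayanaNum, Nat.add_sub_cancel]
  have h2 : n - j - 1 = n - (j+1) := by omega
  rw [h2, Nat.choose_symm (by omega : j ≤ n), Nat.choose_symm (by omega : j + 1 ≤ n)]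
  ring

lemma redNarayana_eval_neg_one (n : ℕ) (hn : 2 ≤ n) (heven : Even n) :
    (redNarayana n).eval (-1) = 0 := by
  rw [eval_redNarayana]
  apply Finset.sum_involution (g := fun j _ => n - 1 - j)
  · intro j hj
    have hjn : j < n := Finset.mem_range.mp hj
    rw [narayanaNum_symm n j hjn]
    have hs : (-1:ℝ)^(n-1-j) = -(-1:ℝ)^j := by
      have h1 : (-1:ℝ)^(n-1-j) * (-1:ℝ)^j = (-1:ℝ)^(n-1) := by
        rw [← pow_add]; congr 1; omega
      have h2 : Odd (n-1) := by
        rcases heven with ⟨m, hm⟩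
        exact ⟨m-1, by omega⟩
      have h3 : (-1:ℝ)^(n-1) = -1 := h2.neg_one_pow
      have h4 : ((-1:ℝ)^j)^2 = 1 := by
        rcases Nat.even_or_odd j with he | ho
        · rw [he.neg_one_pow]; norm_num
        · rw [ho.neg_one_pow]; norm_num
      have h5 : ((-1:ℝ)^(n-1-j) * (-1)^j) * (-1)^j = -1 * (-1)^j := by rw [h1, h3]
      have h6 : (-1:ℝ)^(n-1-j) * (((-1:ℝ)^j)^2) = -(-1:ℝ)^j := by
        rw [sq, ← mul_assoc]; linarith [h5]
      rw [h4, mul_one] at h6; exact h6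
    rw [hs]; ring
  · intro j hj _
    have hjn : j < n := Finset.mem_range.mp hj
    rcases heven with ⟨m, hm⟩
    omega
  · intro j hj
    exact Finset.mem_range.mpr (by omega)
  · intro j hj
    have hjn : j < n := Finset.mem_range.mp hj
    omega

lemma narayanaP_eval_neg_one (n : ℕ) (hn : 2 ≤ n) (heven : Even n) :
    (narayanaP n).eval (-1) = 0 := by
  have h := congrArg (Polynomial.eval (-1 : ℝ)) (key_identity n hn)
  simp only [Polynomial.eval_mul, Polynomial.eval_sub, Polynomial.eval_add, Polynomial.eval_one,
    Polynomial.eval_X, Polynomial.eval_C, Polynomial.eval_pow, Polynomial.eval_ofNat,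
    redNarayana_eval_neg_one n hn heven] at h
  nlinarith [h]

lemma redNarayana_coeff_top (n : ℕ) (hn : 2 ≤ n) : (redNarayana n).coeff (n-1) = 1 := by
  rw [coeff_redNarayana, if_pos (by omega : n - 1 < n)]
  have h : n - 1 + 1 = n := by omega
  rw [h]; exact narayanaNum_top n hn

lemma natDegree_redNarayana (n : ℕ) (hn : 2 ≤ n) : (redNarayana n).natDegree = n - 1 := by
  apply le_antisymm
  · rw [Polynomial.natDegree_le_iff_coeff_eq_zero]
    intro m hm
    rw [coeff_redNarayana, if_neg (by omega)]
  · exact Polynomial.le_natDegree_of_ne_zero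
      (by rw [redNarayana_coeff_top n hn]; norm_num)

lemma redNarayana_monic (n : ℕ) (hn : 2 ≤ n) : (redNarayana n).Monic := by
  unfold Polynomial.Monic Polynomial.leadingCoeff
  rw [natDegree_redNarayana n hn, redNarayana_coeff_top n hn]

lemma narayanaP_coeff_top (n : ℕ) (hn : 2 ≤ n) : (narayanaP n).coeff (n-1) = 1 := by
  rw [coeff_narayanaP, if_pos (by omega : n - 1 < n)]
  exact narayanaD_top n hn

lemma natDegree_narayanaP (n : ℕ) (hn : 2 ≤ n) : (narayanaP n).natDegree = n - 1 := by
  apply le_antisymm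
  · rw [Polynomial.natDegree_le_iff_coeff_eq_zero]
    intro m hm
    rw [coeff_narayanaP, if_neg (by omega)]
  · exact Polynomial.le_natDegree_of_ne_zero
      (by rw [narayanaP_coeff_top n hn]; norm_num)

lemma narayanaP_monic (n : ℕ) (hn : 2 ≤ n) : (narayanaP n).Monic := by
  unfold Polynomial.Monic Polynomial.leadingCoeff
  rw [natDegree_narayanaP n hn, narayanaP_coeff_top n hn]

section Qfacts
variable {n : ℕ} {Q : Polynomial ℝ} {u : ℕ → ℝ}

lemma Q_ne_zero (hn : 2 ≤ n) (hQ : (Polynomial.X + Polynomial.C 1) * Q = redNarayana n) :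
    Q ≠ 0 := by
  intro h
  rw [h, mul_zero] at hQ
  exact (redNarayana_monic n hn).ne_zero hQ.symm

lemma Q_natDegree (hn : 2 ≤ n) (hQ : (Polynomial.X + Polynomial.C 1) * Q = redNarayana n) :
    Q.natDegree = n - 2 := by
  have h1 : (Polynomial.X + Polynomial.C (1:ℝ)).natDegree = 1 := Polynomial.natDegree_X_add_C 1
  have h2 := Polynomial.natDegree_mul (p := Polynomial.X + Polynomial.C (1:ℝ)) (q := Q)
    (Polynomial.X_add_C_ne_zero 1) (Q_ne_zero hn hQ)
  rw [hQ, natDegree_redNarayana n hn, h1] at h2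
  omega

lemma Q_monic (hn : 2 ≤ n) (hQ : (Polynomial.X + Polynomial.C 1) * Q = redNarayana n) :
    Q.Monic := by
  have h1 : (Polynomial.X + Polynomial.C (1:ℝ)).Monic := Polynomial.monic_X_add_C 1
  have h2 : ((Polynomial.X + Polynomial.C (1:ℝ)) * Q).leadingCoeff = 1 := by
    rw [hQ]; exact redNarayana_monic n hn
  rwa [Polynomial.leadingCoeff_mul, h1.leadingCoeff, one_mul] at h2

lemma Q_eq_prod (hn : 2 ≤ n) (hQ : (Polynomial.X + Polynomial.C 1) * Q = redNarayana n)
    (hu : ∀ i j : ℕ, i < j → j < n - 2 → u i < u j)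
    (huroots : ∀ r : ℝ, Q.eval r = 0 ↔ ∃ i < n - 2, u i = r) :
    Q = ∏ i ∈ Finset.range (n-2), (Polynomial.X - Polynomial.C (u i)) := by
  have hpmonic : (∏ i ∈ Finset.range (n-2), (Polynomial.X - Polynomial.C (u i))).Monic :=
    Polynomial.monic_prod_of_monic _ _ fun i _ => Polynomial.monic_X_sub_C _
  have hpdeg : (∏ i ∈ Finset.range (n-2), (Polynomial.X - Polynomial.C (u i))).natDegree = n-2 := by
    rw [Polynomial.natDegree_prod_of_monic _ _ fun i _ => Polynomial.monic_X_sub_C _]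
    simp
  have hQm : Q.natDegree = n-2 := Q_natDegree hn hQ
  rcases Nat.eq_zero_or_pos (n-2) with h0 | h0
  · rw [h0, Finset.range_zero, Finset.prod_empty]
    have hQdeg : Q.natDegree = 0 := by rw [hQm, h0]
    have heq := Polynomial.eq_C_of_natDegree_eq_zero hQdeg
    rw [heq]
    have hc : Q.coeff 0 = 1 := by
      have hmon := Q_monic hn hQ
      unfold Polynomial.Monic Polynomial.leadingCoeff at hmon
      rwa [hQdeg] at hmon
    simp [hc]
  · have hsub : Q - (∏ i ∈ Finset.range (n-2), (Polynomial.X - Polynomial.C (u i))) = 0 := by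
      apply Polynomial.eq_zero_of_natDegree_lt_card_of_eval_eq_zero' _
        ((Finset.range (n-2)).image u)
      · intro r hr
        simp only [Finset.mem_image, Finset.mem_range] at hr
        obtain ⟨i, hi, rfl⟩ := hr
        have hQr : Q.eval (u i) = 0 := (huroots (u i)).mpr ⟨i, hi, rfl⟩
        have hpr : (∏ i ∈ Finset.range (n-2), (Polynomial.X - Polynomial.C (u i))).eval (u i) = 0 := by
          rw [Polynomial.eval_prod]
          apply Finset.prod_eq_zero (Finset.mem_range.mpr hi)
          simp
        simp [Polynomial.eval_sub, hQr, hpr]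
      · have hcard : ((Finset.range (n-2)).image u).card = n-2 := by
          rw [Finset.card_image_of_injOn, Finset.card_range]
          intro a ha b hb hab
          simp only [Finset.mem_coe, Finset.mem_range] at ha hb
          by_contra hne
          rcases lt_or_gt_of_ne hne with h | h
          · exact absurd hab (ne_of_lt (hu a b h hb))
          · exact absurd hab.symm (ne_of_lt (hu b a h ha))
        rw [hcard]
        have hcoeff : ∀ k, n-2 ≤ k →
            (Q - (∏ i ∈ Finset.range (n-2), (Polynomial.X - Polynomial.C (u i)))).coeff k = 0 := by
          intro k hk
          rcases eq_or_lt_of_le hk with heq | hlt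
          · have c1 : Q.coeff (n-2) = 1 := by
              have hmon := Q_monic hn hQ
              unfold Polynomial.Monic Polynomial.leadingCoeff at hmon
              rwa [hQm] at hmon
            have c2 : (∏ i ∈ Finset.range (n-2), (Polynomial.X - Polynomial.C (u i))).coeff (n-2) = 1 := by
              have hmon := hpmonic
              unfold Polynomial.Monic Polynomial.leadingCoeff at hmon
              rwa [hpdeg] at hmon
            rw [Polynomial.coeff_sub, ← heq, c1, c2, sub_self]
          · rw [Polynomial.coeff_sub,
              Polynomial.coeff_eq_zero_of_natDegree_lt (by omega : Q.natDegree < k),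
              Polynomial.coeff_eq_zero_of_natDegree_lt (by omega :
                (∏ i ∈ Finset.range (n-2), (Polynomial.X - Polynomial.C (u i))).natDegree < k),
              sub_self]
        have hle : (Q - (∏ i ∈ Finset.range (n-2), (Polynomial.X - Polynomial.C (u i)))).natDegree ≤ n-2-1 := by
          rw [Polynomial.natDegree_le_iff_coeff_eq_zero]
          intro k hk
          exact hcoeff k (by omega)
        omega
    exact sub_eq_zero.mp hsub
end Qfacts

section Qfacts2
variable {n : ℕ} {Q : Polynomial ℝ} {u : ℕ → ℝ}

lemma Qderiv_eval (hn : 2 ≤ n) (hQ : (Polynomial.X + Polynomial.C 1) * Q = redNarayana n)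
    (hu : ∀ i j : ℕ, i < j → j < n - 2 → u i < u j)
    (huroots : ∀ r : ℝ, Q.eval r = 0 ↔ ∃ i < n - 2, u i = r)
    {i : ℕ} (hi : i < n - 2) :
    (Polynomial.derivative Q).eval (u i)
      = ∏ j ∈ (Finset.range (n-2)).erase i, (u i - u j) := by
  have hprod := Q_eq_prod hn hQ hu huroots
  have hsplit : Q = (Polynomial.X - Polynomial.C (u i)) *
      ∏ j ∈ (Finset.range (n-2)).erase i, (Polynomial.X - Polynomial.C (u j)) := by
    rw [hprod, ← Finset.mul_prod_erase _ _ (Finset.mem_range.mpr hi)]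
  rw [hsplit, Polynomial.derivative_mul]
  simp only [Polynomial.derivative_sub, Polynomial.derivative_X, Polynomial.derivative_C,
    sub_zero, one_mul, Polynomial.eval_add, Polynomial.eval_mul, Polynomial.eval_sub,
    Polynomial.eval_X, Polynomial.eval_C, sub_self, zero_mul, add_zero, mul_zero]
  rw [Polynomial.eval_prod]
  simp

lemma Qderiv_sign (hn : 2 ≤ n) (hQ : (Polynomial.X + Polynomial.C 1) * Q = redNarayana n)
    (hu : ∀ i j : ℕ, i < j → j < n - 2 → u i < u j)
    (huroots : ∀ r : ℝ, Q.eval r = 0 ↔ ∃ i < n - 2, u i = r)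
    {i : ℕ} (hi : i < n - 2) :
    0 < (-1:ℝ)^(n - 2 - 1 - i) * (Polynomial.derivative Q).eval (u i) := by
  rw [Qderiv_eval hn hQ hu huroots hi]
  have hsplit : (Finset.range (n-2)).erase i = Finset.range i ∪ Finset.Ico (i+1) (n-2) := by
    ext j
    simp only [Finset.mem_erase, Finset.mem_range, Finset.mem_union, Finset.mem_Ico]
    omega
  have hdisj : Disjoint (Finset.range i) (Finset.Ico (i+1) (n-2)) := by
    rw [Finset.disjoint_left]
    intro j hj hj'
    simp only [Finset.mem_range] at hj
    simp only [Finset.mem_Ico] at hj'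
    omega
  rw [hsplit, Finset.prod_union hdisj]
  have h1 : 0 < ∏ j ∈ Finset.range i, (u i - u j) := by
    apply Finset.prod_pos
    intro j hj
    have := hu j i (Finset.mem_range.mp hj) hi
    linarith
  have h2 : ∏ j ∈ Finset.Ico (i+1) (n-2), (u i - u j)
      = (-1:ℝ)^(n - 2 - 1 - i) * ∏ j ∈ Finset.Ico (i+1) (n-2), (u j - u i) := by
    have : ∀ j ∈ Finset.Ico (i+1) (n-2), u i - u j = (-1) * (u j - u i) := by
      intro j _; ring
    rw [Finset.prod_congr rfl this, Finset.prod_mul_distrib, Finset.prod_const,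
      Nat.card_Ico]
    congr 2
    omega
  rw [h2]
  have h3 : 0 < ∏ j ∈ Finset.Ico (i+1) (n-2), (u j - u i) := by
    apply Finset.prod_pos
    intro j hj
    simp only [Finset.mem_Ico] at hj
    have := hu i j (by omega) hj.2
    linarith
  have h4 : ((-1:ℝ)^(n - 2 - 1 - i)) * ((-1:ℝ)^(n - 2 - 1 - i)) = 1 := by
    rw [← pow_add]
    exact Even.neg_one_pow ⟨n - 2 - 1 - i, rfl⟩
  have h5 : (-1:ℝ)^(n-2-1-i) * ((∏ j ∈ Finset.range i, (u i - u j))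
      * ((-1:ℝ)^(n-2-1-i) * ∏ j ∈ Finset.Ico (i+1) (n-2), (u j - u i)))
      = (((-1:ℝ)^(n-2-1-i)) * ((-1:ℝ)^(n-2-1-i)))
        * ((∏ j ∈ Finset.range i, (u i - u j)) * ∏ j ∈ Finset.Ico (i+1) (n-2), (u j - u i)) := by
    ring
  rw [h5, h4, one_mul]
  exact mul_pos h1 h3

lemma u_neg (hn : 2 ≤ n) (hQ : (Polynomial.X + Polynomial.C 1) * Q = redNarayana n)
    (huroots : ∀ r : ℝ, Q.eval r = 0 ↔ ∃ i < n - 2, u i = r)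
    {i : ℕ} (hi : i < n - 2) : u i < 0 := by
  by_contra h
  push_neg at h
  have hQr : Q.eval (u i) = 0 := (huroots (u i)).mpr ⟨i, hi, rfl⟩
  have h1 : (redNarayana n).eval (u i) = 0 := by
    rw [← hQ, Polynomial.eval_mul, hQr, mul_zero]
  have := redNarayana_pos n hn (u i) h
  linarith

lemma Q_eval_neg_one (hQ : (Polynomial.X + Polynomial.C 1) * Q = redNarayana n) :
    Q.eval (-1) = (Polynomial.derivative (redNarayana n)).eval (-1) := by
  rw [← hQ, Polynomial.derivative_mul]
  simp [Polynomial.eval_add, Polynomial.eval_mul]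

end Qfacts2

lemma coeff_one_sub_X_pow_s16 (m k : ℕ) :
    ((1 - Polynomial.X : Polynomial ℝ)^m).coeff k = (-1:ℝ)^k * (m.choose k) := by
  have h1 : (1 - Polynomial.X : Polynomial ℝ)
      = Polynomial.C (-1:ℝ) * (Polynomial.X + Polynomial.C (-1)) := by
    simp; ring
  rw [h1, mul_pow, ← Polynomial.C_pow, Polynomial.coeff_C_mul, Polynomial.coeff_X_add_C_pow]
  rcases le_or_gt k m with hkm | hkm
  · have e1 : (-1:ℝ)^(m-k) * (-1)^k = (-1)^m := by
      rw [← pow_add]; congr 1; omega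
    have e2 : (-1:ℝ)^(m-k) * (-1)^(m-k) = 1 := by
      rw [← pow_add]; exact Even.neg_one_pow ⟨m-k, rfl⟩
    calc (-1:ℝ)^m * ((-1)^(m-k) * (m.choose k))
        = ((-1:ℝ)^(m-k) * (-1)^k) * ((-1)^(m-k) * (m.choose k)) := by rw [e1]
      _ = ((-1:ℝ)^(m-k) * (-1)^(m-k)) * ((-1)^k * (m.choose k)) := by ring
      _ = (-1:ℝ)^k * (m.choose k) := by rw [e2, one_mul]
  · rw [Nat.choose_eq_zero_of_lt hkm]
    simp

lemma coeff_one_sub_X_sq_pow (m t : ℕ) :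
    ((1 - Polynomial.X^2 : Polynomial ℝ)^m).coeff t
      = if t % 2 = 0 then (-1:ℝ)^(t/2) * (m.choose (t/2)) else 0 := by
  have hexp : (1 - Polynomial.X^2 : Polynomial ℝ)^m
      = ∑ k ∈ Finset.range (m+1),
          Polynomial.C ((-1:ℝ)^k * (m.choose k)) * Polynomial.X^(2*k) := by
    have h1 : (1 - Polynomial.X^2 : Polynomial ℝ) = (-(Polynomial.X^2)) + 1 := by ring
    rw [h1, add_pow]
    apply Finset.sum_congr rfl
    intro k _
    rw [one_pow, mul_one, neg_pow, ← pow_mul]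
    rw [Polynomial.C_mul, Polynomial.C_pow]
    simp [mul_comm, mul_assoc, mul_left_comm]
  rw [hexp, Polynomial.finset_sum_coeff]
  simp only [Polynomial.coeff_C_mul, Polynomial.coeff_X_pow]
  rcases Nat.even_or_odd t with he | ho
  · obtain ⟨s, hs⟩ := he
    rw [if_pos (by omega)]
    have hts : t / 2 = s := by omega
    rw [hts]
    rcases le_or_gt s m with hsm | hsm
    · rw [Finset.sum_eq_single s]
      · rw [if_pos (by omega)]; ring
      · intro k _ hk
        rw [if_neg (by omega), mul_zero]
      · intro hs'
        exact absurd (Finset.mem_range.mpr (by omega)) hs'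
    · rw [Nat.choose_eq_zero_of_lt hsm]
      rw [Finset.sum_eq_zero]
      · simp
      · intro k hk
        have : k < m + 1 := Finset.mem_range.mp hk
        rw [if_neg (by omega), mul_zero]
  · obtain ⟨s, hs⟩ := ho
    rw [if_neg (by omega)]
    apply Finset.sum_eq_zero
    intro k _
    rw [if_neg (by omega), mul_zero]

lemma alt_sum_choose (n : ℕ) (hn : 2 ≤ n) (heven : Even n) :
    ∑ a ∈ Finset.range (n-1), (-1:ℝ)^a * ((n-1).choose a) * (n.choose (a+2))
      = (-1:ℝ)^((n-2)/2) * ((n-1).choose ((n-2)/2)) := by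
  have key : ((1 - Polynomial.X : Polynomial ℝ)^(n-1) * (1 + Polynomial.X)^n)
      = ((1 - Polynomial.X^2)^(n-1) * (1 + Polynomial.X)) := by
    have e1 : (1 + Polynomial.X : Polynomial ℝ)^n
        = (1 + Polynomial.X)^(n-1) * (1 + Polynomial.X) := by
      rw [← pow_succ]; congr 1; omega
    rw [e1, ← mul_assoc, ← mul_pow]
    congr 2
    ring
  have hL := congrArg (fun p : Polynomial ℝ => p.coeff (n-2)) key
  simp only [Polynomial.coeff_mul] at hL
  rw [Finset.Nat.sum_antidiagonal_eq_sum_range_succ_mk,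
    Finset.Nat.sum_antidiagonal_eq_sum_range_succ_mk] at hL
  have hrangeeq : n - 2 + 1 = n - 1 := by omega
  simp only [Nat.succ_eq_add_one, hrangeeq, Prod.fst, Prod.snd] at hL
  have hLHS : ∑ a ∈ Finset.range (n-1),
      ((1 - Polynomial.X : Polynomial ℝ)^(n-1)).coeff a * ((1 + Polynomial.X : Polynomial ℝ)^n).coeff (n-2-a)
      = ∑ a ∈ Finset.range (n-1), (-1:ℝ)^a * ((n-1).choose a) * (n.choose (a+2)) := by
    apply Finset.sum_congr rfl
    intro a ha
    have haa : a < n - 1 := Finset.mem_range.mp ha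
    rw [coeff_one_sub_X_pow_s16, Polynomial.coeff_one_add_X_pow]
    have hsym : n.choose (n-2-a) = n.choose (a+2) := by
      have h1 : n - 2 - a = n - (a + 2) := by omega
      rw [h1, Nat.choose_symm (by omega : a + 2 ≤ n)]
    rw [hsym, mul_assoc]
  have hRHS : ∑ a ∈ Finset.range (n-1),
      ((1 - Polynomial.X^2 : Polynomial ℝ)^(n-1)).coeff a * ((1 + Polynomial.X : Polynomial ℝ)).coeff (n-2-a)
      = (-1:ℝ)^((n-2)/2) * ((n-1).choose ((n-2)/2)) := by
    have hcoeff1X : ∀ b : ℕ, ((1 + Polynomial.X : Polynomial ℝ)).coeff b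
        = if b = 0 ∨ b = 1 then 1 else 0 := by
      intro b
      have : (1 + Polynomial.X : Polynomial ℝ) = (1 + Polynomial.X)^1 := by ring
      rw [this, Polynomial.coeff_one_add_X_pow]
      rcases b with _ | b
      · simp
      · rcases b with _ | b
        · simp
        · simp [Nat.choose_eq_zero_of_lt]
    -- only a = n-2 contributes (n-2-a = 0 with a even gives the value; a = n-3 gives odd coeff 0)
    rw [Finset.sum_eq_single (n-2)]
    · rw [coeff_one_sub_X_sq_pow, hcoeff1X]
      have h2 : (n-2) % 2 = 0 := by
        obtain ⟨m, hm⟩ := heven; omega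
      rw [if_pos h2, if_pos (by omega : n-2-(n-2) = 0 ∨ n-2-(n-2) = 1)]
      ring
    · intro a ha hane
      have haa : a < n - 1 := Finset.mem_range.mp ha
      have hab : a < n - 2 := by omega
      rcases Nat.lt_or_ge a (n-3) with h3 | h3
      · rw [hcoeff1X, if_neg (by omega), mul_zero]
      · have ha3 : a = n - 3 := by omega
        have hodd : a % 2 = 1 := by
          obtain ⟨m, hm⟩ := heven; omega
        rw [coeff_one_sub_X_sq_pow, if_neg (by omega), zero_mul]
    · intro hmem
      exact absurd (Finset.mem_range.mpr (by omega)) hmem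
  rw [hLHS, hRHS] at hL
  exact hL

lemma Nder_eval_neg_one (n : ℕ) (hn : 2 ≤ n) (heven : Even n) :
    (Polynomial.derivative (redNarayana n)).eval (-1)
      = (-1:ℝ)^((n-2)/2) * ((n-1).choose ((n-2)/2)) := by
  have hNdeg : (redNarayana n).natDegree = n - 1 := natDegree_redNarayana n hn
  have hdeg : (Polynomial.derivative (redNarayana n)).natDegree < n := by
    have := Polynomial.natDegree_derivative_le (redNarayana n)
    omega
  rw [Polynomial.eval_eq_sum_range' hdeg]
  have hterm : ∀ i ∈ Finset.range n,
      (Polynomial.derivative (redNarayana n)).coeff i * (-1:ℝ)^i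
      = (if i < n-1 then (-1:ℝ)^i * (((n-1).choose i : ℝ) * (n.choose (i+2) : ℝ)) else 0) := by
    intro i _
    rw [Polynomial.coeff_derivative, coeff_redNarayana]
    rcases lt_or_ge i (n-1) with hi | hi
    · rw [if_pos (by omega : i + 1 < n), if_pos hi]
      have hrel : (n:ℝ) * ((n-1).choose i : ℝ) = (n.choose (i+1) : ℝ) * ((i:ℝ)+1) := by
        have h := Nat.add_one_mul_choose_eq (n-1) i
        rw [Nat.sub_add_cancel (by omega : 1 ≤ n)] at h
        exact_mod_cast h
      have hN0 : (n:ℝ) ≠ 0 := by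
        have : 0 < n := by omega
        exact_mod_cast this.ne'
      have hc : narayanaNum n (i+1+1) * ((i:ℝ)+1)
          = ((n-1).choose i : ℝ) * (n.choose (i+2) : ℝ) := by
        simp only [narayanaNum, Nat.add_sub_cancel]
        field_simp
        calc (n.choose (i+2) : ℝ) * (n.choose (i+1) : ℝ) * ((i:ℝ)+1)
            = (n.choose (i+2) : ℝ) * ((n.choose (i+1) : ℝ) * ((i:ℝ)+1)) := by ring
          _ = (n.choose (i+2) : ℝ) * ((n:ℝ) * ((n-1).choose i : ℝ)) := by rw [← hrel]
          _ = ((n-1).choose i : ℝ) * (n.choose (i+2) : ℝ) * (n:ℝ) := by ring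
        rw [show i+1+1 = i+2 from rfl]; ring
      rw [hc]; ring
    · rw [if_neg (by omega), if_neg (by omega)]
      ring
  rw [Finset.sum_congr rfl hterm]
  rw [← Finset.sum_subset (Finset.range_subset_range.mpr (by omega : n - 1 ≤ n))
    (fun x _ hx => by rw [if_neg (by simpa using hx)])]
  rw [← alt_sum_choose n hn heven]
  apply Finset.sum_congr rfl
  intro a ha
  rw [if_pos (Finset.mem_range.mp ha)]
  ring

lemma Q_neg_one_ne_zero {n : ℕ} {Q : Polynomial ℝ} (hn : 2 ≤ n) (heven : Even n)
    (hQ : (Polynomial.X + Polynomial.C 1) * Q = redNarayana n) :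
    Q.eval (-1) ≠ 0 := by
  rw [Q_eval_neg_one hQ, Nder_eval_neg_one n hn heven]
  apply mul_ne_zero
  · apply pow_ne_zero; norm_num
  · have : 0 < (n-1).choose ((n-2)/2) := Nat.choose_pos (by omega)
    exact_mod_cast this.ne'

lemma narayanaP_eval_zero (n : ℕ) (hn : 2 ≤ n) : (narayanaP n).eval 0 = 1 := by
  rw [eval_narayanaP, Finset.sum_eq_single 0]
  · rw [narayanaD_zero n hn, pow_zero, mul_one]
  · intro j _ hj
    rw [zero_pow hj, mul_zero]
  · intro h
    exact absurd (Finset.mem_range.mpr (by omega)) h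

lemma narayanaP_neg_far (n : ℕ) (hn : 2 ≤ n) (heven : Even n) (y : ℝ) :
    ∃ x, x < y ∧ (narayanaP n).eval x < 0 := by
  set R := (narayanaP n).comp (-Polynomial.X) with hR
  have hPdeg : (narayanaP n).natDegree = n - 1 := natDegree_narayanaP n hn
  have hRdeg : R.natDegree = n - 1 := by
    rw [hR, Polynomial.natDegree_comp]
    simp [hPdeg]
  have hRlead : R.leadingCoeff = -1 := by
    rw [hR, Polynomial.leadingCoeff_comp (by simp : (-Polynomial.X : Polynomial ℝ).natDegree ≠ 0)]
    rw [(narayanaP_monic n hn).leadingCoeff, hPdeg]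
    have : (-Polynomial.X : Polynomial ℝ).leadingCoeff = -1 := by
      rw [Polynomial.leadingCoeff_neg, Polynomial.leadingCoeff_X]
    rw [this]
    have hodd : Odd (n-1) := by
      obtain ⟨m, hm⟩ := heven
      exact ⟨m-1, by omega⟩
    rw [hodd.neg_one_pow]
    ring
  have hRdegpos : 0 < R.degree := by
    rw [Polynomial.natDegree_pos_iff_degree_pos.symm, hRdeg]
    omega
  have htend := Polynomial.tendsto_atBot_of_leadingCoeff_nonpos R hRdegpos (by rw [hRlead]; norm_num)
  have h1 : ∀ᶠ x in Filter.atTop, (R.eval x) < 0 := htend.eventually (Filter.eventually_lt_atBot 0)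
  have h2 : ∀ᶠ x : ℝ in Filter.atTop, -y < x := Filter.eventually_gt_atTop (-y)
  obtain ⟨x, hx1, hx2⟩ := (h1.and h2).exists
  refine ⟨-x, by linarith, ?_⟩
  have : R.eval x = (narayanaP n).eval (-x) := by
    rw [hR, Polynomial.eval_comp]
    simp
  linarith [this ▸ hx1]

lemma P_sign {n : ℕ} {Q : Polynomial ℝ} {u : ℕ → ℝ} (hn : 2 ≤ n) (heven : Even n)
    (hQ : (Polynomial.X + Polynomial.C 1) * Q = redNarayana n)
    (hu : ∀ i j : ℕ, i < j → j < n - 2 → u i < u j)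
    (huroots : ∀ r : ℝ, Q.eval r = 0 ↔ ∃ i < n - 2, u i = r)
    {i : ℕ} (hi : i < n - 2) :
    0 < (-1:ℝ)^i * (narayanaP n).eval (u i) := by
  have hneg : u i < 0 := u_neg hn hQ huroots hi
  have hQt : Q.eval (u i) = 0 := (huroots (u i)).mpr ⟨i, hi, rfl⟩
  have hNt : (redNarayana n).eval (u i) = 0 := by
    rw [← hQ]; simp [hQt]
  have hne1 : u i ≠ -1 := by
    intro h
    exact Q_neg_one_ne_zero hn heven hQ (h ▸ hQt)
  have hNdt : (Polynomial.derivative (redNarayana n)).eval (u i)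
      = (u i + 1) * (Polynomial.derivative Q).eval (u i) := by
    rw [← hQ, Polynomial.derivative_mul]
    simp [hQt]
  have hkey := congrArg (Polynomial.eval (u i)) (key_identity n hn)
  simp only [Polynomial.eval_mul, Polynomial.eval_sub, Polynomial.eval_add, Polynomial.eval_one,
    Polynomial.eval_X, Polynomial.eval_C, Polynomial.eval_pow, Polynomial.eval_ofNat,
    hNt, hNdt, mul_zero, zero_add] at hkey
  have hsgn : 0 < (-1:ℝ)^(n-2-1-i) * (Polynomial.derivative Q).eval (u i) :=
    Qderiv_sign hn hQ hu huroots hi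
  have hsq : (-1:ℝ)^(n-2-1-i) * (-1)^(n-2-1-i) = 1 := by
    rw [← pow_add]; exact Even.neg_one_pow ⟨n-2-1-i, rfl⟩
  have hpar : (-1:ℝ)^i * (-1)^(n-2-1-i) = -1 := by
    rw [← pow_add]
    have hodd : Odd (i + (n-2-1-i)) := by
      obtain ⟨m, hm⟩ := heven
      exact ⟨m - 2, by omega⟩
    exact hodd.neg_one_pow
  have hAneg : (-1:ℝ)^i * (Polynomial.derivative Q).eval (u i) < 0 := by
    have h2 : (-1:ℝ)^i * (Polynomial.derivative Q).eval (u i)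
        = -((-1:ℝ)^(n-2-1-i) * (Polynomial.derivative Q).eval (u i)) := by
      calc (-1:ℝ)^i * (Polynomial.derivative Q).eval (u i)
          = ((-1:ℝ)^i * ((-1:ℝ)^(n-2-1-i) * (-1)^(n-2-1-i)))
            * (Polynomial.derivative Q).eval (u i) := by rw [hsq]; ring
        _ = ((-1:ℝ)^i * (-1)^(n-2-1-i))
            * ((-1:ℝ)^(n-2-1-i) * (Polynomial.derivative Q).eval (u i)) := by ring
        _ = -((-1:ℝ)^(n-2-1-i) * (Polynomial.derivative Q).eval (u i)) := by rw [hpar]; ring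
    rw [h2]
    linarith
  have h1u : (0:ℝ) < (1 + u i)^2 :=
    pow_two_pos_of_ne_zero (by intro h; apply hne1; linarith)
  have heq2 : (1 - u i) * ((-1:ℝ)^i * (narayanaP n).eval (u i))
      = (2 * u i) * ((-1:ℝ)^i * (Polynomial.derivative Q).eval (u i)) * (1 + u i)^2 := by
    calc (1 - u i) * ((-1:ℝ)^i * (narayanaP n).eval (u i))
        = (-1:ℝ)^i * ((1 - u i) * (narayanaP n).eval (u i)) := by ring
      _ = (-1:ℝ)^i * ((2 * u i + 2 * u i^2) * ((u i + 1) * (Polynomial.derivative Q).eval (u i))) := by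
          rw [hkey]
      _ = (2 * u i) * ((-1:ℝ)^i * (Polynomial.derivative Q).eval (u i)) * (1 + u i)^2 := by ring
  have hpos : 0 < (2 * u i) * ((-1:ℝ)^i * (Polynomial.derivative Q).eval (u i)) * (1 + u i)^2 :=
    mul_pos (mul_pos_of_neg_of_neg (by linarith) hAneg) h1u
  nlinarith [heq2, hpos, hneg]


/-- for even `n ≥ 2`, both `𝒩_n` and `𝒫_n` vanish at `x = −1`, `𝒫_n` has
`n−1` real simple zeros `w 0 < … < w (n-2)`, and they interlace with the zeros
`u 0 < … < u (n-3)` of the quotient `Q_n = 𝒩_n/(x+1)`: `𝒫_n(x) ≺ 𝒩_n(x)/(x+1)`. -/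
theorem stmt_16 (n : ℕ) (hn : 2 ≤ n) (heven : Even n)
    (Q : Polynomial ℝ) (hQ : (Polynomial.X + Polynomial.C 1) * Q = redNarayana n)
    (u : ℕ → ℝ)
    (hu : ∀ i j : ℕ, i < j → j < n - 2 → u i < u j)
    (huroots : ∀ r : ℝ, Q.eval r = 0 ↔ ∃ i < n - 2, u i = r) :
    (redNarayana n).eval (-1) = 0 ∧
    (narayanaP n).eval (-1) = 0 ∧
    (∃ w : ℕ → ℝ, (∀ i j : ℕ, i < j → j < n - 1 → w i < w j) ∧
      (∀ r : ℝ, (narayanaP n).eval r = 0 ↔ ∃ i < n - 1, w i = r) ∧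
      (∀ i < n - 2, w i < u i) ∧ (∀ i < n - 2, u i < w (i + 1))) := by
  refine ⟨redNarayana_eval_neg_one n hn heven, narayanaP_eval_neg_one n hn heven, ?_⟩
  obtain ⟨x₀, hx₀lt, hx₀neg⟩ := narayanaP_neg_far n hn heven
    (if 0 < n - 2 then u 0 else 0)
  -- boundary sequence
  set v : ℕ → ℝ := fun k => if k = 0 then x₀ else if k ≤ n - 2 then u (k-1) else 0 with hv
  have hv0 : v 0 = x₀ := by simp [hv]
  have hvmid : ∀ k, 1 ≤ k → k ≤ n - 2 → v k = u (k-1) := by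
    intro k h1 h2
    simp only [hv]
    rw [if_neg (by omega), if_pos h2]
  have hvtop : v (n-1) = 0 := by
    simp only [hv]
    rw [if_neg (by omega), if_neg (by omega)]
  have hmn : n - 2 + 1 = n - 1 := by omega
  -- v is strictly increasing on 0..n-1
  have hvlt : ∀ k < n - 1, v k < v (k+1) := by
    intro k hk
    rcases Nat.eq_zero_or_pos k with rfl | hkpos
    · rw [hv0]
      rcases Nat.eq_zero_or_pos (n-2) with h0 | h0
      · have : (1:ℕ) = n - 1 := by omega
        rw [← this] at hvtop
        rw [hvtop]
        simpa [h0] using hx₀lt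
      · rw [hvmid 1 le_rfl (by omega)]
        simpa [h0] using hx₀lt
    · rcases Nat.lt_or_ge (k+1) (n-1) with hlt | hge
      · rw [hvmid k hkpos (by omega), hvmid (k+1) (by omega) (by omega)]
        have := hu (k-1) k (by omega) (by omega)
        simpa using this
      · have hk1 : k + 1 = n - 1 := by omega
        rw [hvmid k hkpos (by omega), hk1, hvtop]
        exact u_neg hn hQ huroots (by omega : k - 1 < n - 2)
  have hvmono : ∀ a b, a ≤ b → b ≤ n - 1 → v a ≤ v b := by
    intro a b hab hb
    induction b with
    | zero => simp [Nat.le_zero.mp hab]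
    | succ c ih =>
      rcases Nat.lt_or_ge a (c+1) with h | h
      · have := ih (by omega) (by omega)
        have h2 := hvlt c (by omega)
        linarith
      · have : a = c + 1 := by omega
        rw [this]
  -- sign of P at boundaries
  have hsign_lo : ∀ k < n - 1, (-1:ℝ)^k * (narayanaP n).eval (v k) < 0 := by
    intro k hk
    rcases Nat.eq_zero_or_pos k with rfl | hkpos
    · simpa [hv0] using hx₀neg
    · rw [hvmid k hkpos (by omega)]
      have := P_sign hn heven hQ hu huroots (show k - 1 < n - 2 by omega)
      have hks : (-1:ℝ)^k = -(-1:ℝ)^(k-1) := by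
        conv_lhs => rw [show k = (k-1)+1 by omega]
        rw [pow_succ]; ring
      rw [hks]
      linarith
  have hsign_hi : ∀ k < n - 1, 0 < (-1:ℝ)^k * (narayanaP n).eval (v (k+1)) := by
    intro k hk
    rcases Nat.lt_or_ge (k+1) (n-1) with hlt | hge
    · rw [hvmid (k+1) (by omega) (by omega)]
      simpa using P_sign hn heven hQ hu huroots (show k + 1 - 1 < n - 2 by omega)
    · have hk1 : k + 1 = n - 1 := by omega
      rw [hk1, hvtop, narayanaP_eval_zero n hn, mul_one]
      have hkeven : Even k := by
        obtain ⟨m, hm⟩ := heven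
        exact ⟨m - 1, by omega⟩
      rw [hkeven.neg_one_pow]
      norm_num
  -- a root in each interval
  have hroot : ∀ k, k < n - 1 → ∃ r, r ∈ Set.Ioo (v k) (v (k+1)) ∧ (narayanaP n).eval r = 0 := by
    intro k hk
    have hcont : ContinuousOn (fun x => (-1:ℝ)^k * (narayanaP n).eval x)
        (Set.Icc (v k) (v (k+1))) :=
      (continuous_const.mul (narayanaP n).continuous).continuousOn
    have hsub := intermediate_value_Ioo (le_of_lt (hvlt k hk)) hcont
    have h0mem : (0:ℝ) ∈ Set.Ioo ((-1:ℝ)^k * (narayanaP n).eval (v k))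
        ((-1:ℝ)^k * (narayanaP n).eval (v (k+1))) :=
      ⟨hsign_lo k hk, hsign_hi k hk⟩
    obtain ⟨r, hrmem, hgr⟩ := hsub h0mem
    refine ⟨r, hrmem, ?_⟩
    have hne : (-1:ℝ)^k ≠ 0 := by
      apply pow_ne_zero; norm_num
    exact (mul_eq_zero.mp hgr).resolve_left hne
  classical
  set w : ℕ → ℝ := fun k => if h : k < n - 1 then (hroot k h).choose else 0 with hw
  have hwspec : ∀ k (h : k < n - 1),
      w k ∈ Set.Ioo (v k) (v (k+1)) ∧ (narayanaP n).eval (w k) = 0 := by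
    intro k h
    simp only [hw, dif_pos h]
    exact (hroot k h).choose_spec
  have hwmono : ∀ i j : ℕ, i < j → j < n - 1 → w i < w j := by
    intro i j hij hj
    have h1 := (hwspec i (by omega)).1.2
    have h2 := (hwspec j hj).1.1
    have h3 : v (i+1) ≤ v j := hvmono (i+1) j (by omega) (by omega)
    linarith
  refine ⟨w, hwmono, ?_, ?_, ?_⟩
  · intro r
    constructor
    · intro hr
      by_contra hc
      push_neg at hc
      have hinj : Set.InjOn w (Finset.range (n-1)) := by
        intro a ha b hb hab
        simp only [Finset.coe_range, Set.mem_Iio] at ha hb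
        by_contra hne
        rcases lt_or_gt_of_ne hne with h | h
        · exact absurd hab (ne_of_lt (hwmono a b h hb))
        · exact absurd hab.symm (ne_of_lt (hwmono b a h ha))
      have hnmem : r ∉ (Finset.range (n-1)).image w := by
        intro hmem
        obtain ⟨i, hi, hwi⟩ := Finset.mem_image.mp hmem
        exact hc i (Finset.mem_range.mp hi) hwi
      have hcard : (insert r ((Finset.range (n-1)).image w)).card = n := by
        rw [Finset.card_insert_of_notMem hnmem,
          Finset.card_image_of_injOn hinj, Finset.card_range]
        omega
      have hzero := Polynomial.eq_zero_of_natDegree_lt_card_of_eval_eq_zero' (narayanaP n)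
        (insert r ((Finset.range (n-1)).image w))
        (by
          intro x hx
          rcases Finset.mem_insert.mp hx with rfl | hx'
          · exact hr
          · obtain ⟨i, hi, rfl⟩ := Finset.mem_image.mp hx'
            exact (hwspec i (Finset.mem_range.mp hi)).2)
        (by rw [natDegree_narayanaP n hn, hcard]; omega)
      exact (narayanaP_monic n hn).ne_zero hzero
    · rintro ⟨i, hi, rfl⟩
      exact (hwspec i hi).2
  · intro i hi
    have h1 := (hwspec i (by omega)).1.2
    rw [hvmid (i+1) (by omega) (by omega)] at h1
    simpa using h1
  · intro i hi
    have h1 := (hwspec (i+1) (by omega)).1.1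
    rw [hvmid (i+1) (by omega) (by omega)] at h1
    simpa using h1
end
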